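/- arXiv:1505.08073 — 6 statements merged into one kernel-verified Lean document; each statement's English description precedes it below -/
import Mathlib

section
/- Let H be a complex Hilbert space, let T > 0 and ε > 0, let {λ_n}_{n∈ℕ} be nonzero real numbers and {k_n}_{n∈ℕ} ⊆ H be such that the sequence of functions t ↦ k_n e^{iλ_n t} is a Riesz sequence in L²(0,T;H). Suppose {α_n} are complex numbers such that the series Σ_n α_n k_n e^{iλ_n t} converges in L²(0,T+ε;H) to a function f which admits a representative that is absolutely continuous on [0,T+ε] with derivative belonging to L²(0,T+ε;H). Then the sequence {λ_n α_n} belongs to ℓ², i.e., α_n = δ_n/λ_n with Σ_n |δ_n|² < ∞. -/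
open MeasureTheory Filter

open intervalIntegral in
lemma cs_aux {E : Type*} [NormedAddCommGroup E] (f : ℝ → E) (a b : ℝ) (hab : a ≤ b)
    (hf2 : MemLp f 2 (volume.restrict (Set.Ioc a b))) :
    (∫ s in Set.Ioc a b, ‖f s‖) ^ 2 ≤ (b - a) * ∫ s in Set.Ioc a b, ‖f s‖ ^ 2 := by
  have hfin : IsFiniteMeasure (volume.restrict (Set.Ioc a b)) :=
    ⟨by simp [Real.volume_Ioc]⟩
  have h1 : MemLp (fun _ : ℝ => (1 : ℝ)) 2 (volume.restrict (Set.Ioc a b)) := memLp_const (1:ℝ)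
  have hcj : (2:ℝ).HolderConjugate 2 := Real.HolderConjugate.two_two
  have key := MeasureTheory.integral_mul_norm_le_Lp_mul_Lq (μ := volume.restrict (Set.Ioc a b))
    (f := fun s => ‖f s‖) (g := fun _ => (1:ℝ)) hcj (by simpa using hf2.norm) (by simpa using h1)
  simp only [Real.norm_eq_abs, abs_norm, mul_one, norm_one, Real.one_rpow] at key
  -- key : ∫ ‖f‖ ≤ (∫ ‖f a‖ ^ (2:ℝ)) ^ (1/2) * (∫ (1:ℝ)) ^ (1/2)
  have hm : (∫ _ in Set.Ioc a b, (1:ℝ)) = b - a := by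
    simp [Real.volume_Ioc, ENNReal.toReal_ofReal (sub_nonneg.mpr hab), hab]
  have hpow : ∀ s, ‖f s‖ ^ (2:ℝ) = ‖f s‖ ^ (2:ℕ) := fun s => by
    rw [← Real.rpow_natCast]; norm_num
  rw [hm] at key
  simp only [hpow] at key
  have hI2 : (0:ℝ) ≤ ∫ s in Set.Ioc a b, ‖f s‖ ^ 2 :=
    integral_nonneg fun s => by positivity
  have hI : (0:ℝ) ≤ ∫ s in Set.Ioc a b, ‖f s‖ := integral_nonneg fun s => norm_nonneg _
  calc (∫ s in Set.Ioc a b, ‖f s‖) ^ 2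
      ≤ ((∫ s in Set.Ioc a b, ‖f s‖ ^ 2) ^ ((1:ℝ)/2) * (b - a) ^ ((1:ℝ)/2)) ^ 2 := by
        apply pow_le_pow_left₀ hI key
    _ = (b - a) * ∫ s in Set.Ioc a b, ‖f s‖ ^ 2 := by
        rw [mul_pow, ← Real.rpow_natCast ((∫ s in Set.Ioc a b, ‖f s‖ ^ 2) ^ ((1:ℝ)/2)),
          ← Real.rpow_natCast ((b - a) ^ ((1:ℝ)/2)), ← Real.rpow_mul hI2, ← Real.rpow_mul (sub_nonneg.mpr hab)]
        norm_num [mul_comm]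


open intervalIntegral in
lemma key_bound {H : Type*} [NormedAddCommGroup H] [NormedSpace ℝ H] [CompleteSpace H]
    (T h : ℝ) (hT : 0 < T) (hh : 0 < h)
    (g2 : ℝ → H) (hg2 : MemLp g2 2 (volume : Measure ℝ)) (hg2i : Integrable g2 volume) :
    ∫ t in Set.Ioc (0:ℝ) T, ‖(∫ s in (0:ℝ)..(t+h), g2 s) - ∫ s in (0:ℝ)..t, g2 s‖ ^ 2
      ≤ h ^ 2 * ∫ s, ‖g2 s‖ ^ 2 := by
  set C₂ : ℝ := ∫ s, ‖g2 s‖ ^ 2 with hC₂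
  have hsq : Integrable (fun s => ‖g2 s‖ ^ 2) volume := hg2.norm.integrable_sq
  set ψ : ℝ → ℝ := fun t => ∫ s in (0:ℝ)..t, ‖g2 s‖ ^ 2 with hψ
  have hψc : Continuous ψ := hsq.continuous_primitive 0
  have hψdiff : ∀ a b : ℝ, ψ b - ψ a = ∫ s in a..b, ‖g2 s‖ ^ 2 := fun a b =>
    integral_interval_sub_left hsq.intervalIntegrable hsq.intervalIntegrable
  have hψnn : ∀ x : ℝ, 0 ≤ x → 0 ≤ ψ x := fun x hx =>
    intervalIntegral.integral_nonneg hx (fun s _ => by positivity)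
  have hψle : ∀ x : ℝ, ψ x ≤ C₂ := by
    intro x
    rcases le_or_gt 0 x with hx | hx
    · have : ψ x = ∫ s in Set.Ioc 0 x, ‖g2 s‖ ^ 2 := integral_of_le hx
      rw [this]
      exact setIntegral_le_integral hsq (Eventually.of_forall fun s => by positivity)
    · have h1 : ψ x ≤ 0 := by
        rw [show ψ x = -∫ s in x..(0:ℝ), ‖g2 s‖ ^ 2 from integral_symm x 0, neg_nonpos]
        exact intervalIntegral.integral_nonneg hx.le (fun s _ => by positivity)
      have h2 : (0:ℝ) ≤ C₂ := integral_nonneg fun s => by positivity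
      linarith
  -- pointwise bound
  have hpt : ∀ t ∈ Set.Ioc (0:ℝ) T,
      ‖(∫ s in (0:ℝ)..(t+h), g2 s) - ∫ s in (0:ℝ)..t, g2 s‖ ^ 2 ≤ h * (ψ (t+h) - ψ t) := by
    intro t _
    have hii : ∀ a b : ℝ, IntervalIntegrable g2 volume a b := fun a b => hg2i.intervalIntegrable
    have h1 : (∫ s in (0:ℝ)..(t+h), g2 s) - ∫ s in (0:ℝ)..t, g2 s = ∫ s in t..(t+h), g2 s :=
      integral_interval_sub_left (hii 0 (t+h)) (hii 0 t)
    have hle : t ≤ t + h := by linarith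
    rw [h1, integral_of_le hle]
    have h2 : ‖∫ s in Set.Ioc t (t+h), g2 s‖ ≤ ∫ s in Set.Ioc t (t+h), ‖g2 s‖ :=
      norm_integral_le_integral_norm _
    have h3 : (∫ s in Set.Ioc t (t+h), ‖g2 s‖) ^ 2
        ≤ ((t+h) - t) * ∫ s in Set.Ioc t (t+h), ‖g2 s‖ ^ 2 :=
      cs_aux g2 t (t+h) hle (hg2.restrict _)
    have h4 : ‖∫ s in Set.Ioc t (t+h), g2 s‖ ^ 2 ≤ (∫ s in Set.Ioc t (t+h), ‖g2 s‖) ^ 2 :=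
      pow_le_pow_left₀ (norm_nonneg _) h2 2
    have h5 : ∫ s in Set.Ioc t (t+h), ‖g2 s‖ ^ 2 = ψ (t+h) - ψ t := by
      rw [hψdiff t (t+h), integral_of_le hle]
    calc ‖∫ s in Set.Ioc t (t+h), g2 s‖ ^ 2
        ≤ ((t+h) - t) * ∫ s in Set.Ioc t (t+h), ‖g2 s‖ ^ 2 := le_trans h4 h3
      _ = h * (ψ (t+h) - ψ t) := by rw [h5]; ring_nf
  -- integrate
  have hψsh : Continuous fun t : ℝ => ψ (t + h) := hψc.comp (continuous_add_right h)
  have hcont : Continuous fun t => h * (ψ (t+h) - ψ t) := continuous_const.mul (hψsh.sub hψc)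
  have hmono : ∫ t in Set.Ioc (0:ℝ) T, ‖(∫ s in (0:ℝ)..(t+h), g2 s) - ∫ s in (0:ℝ)..t, g2 s‖ ^ 2
      ≤ ∫ t in Set.Ioc (0:ℝ) T, h * (ψ (t+h) - ψ t) := by
    apply integral_mono_of_nonneg (Eventually.of_forall fun t => by positivity)
      (hcont.integrableOn_Ioc)
    filter_upwards [ae_restrict_mem measurableSet_Ioc] with t ht
    exact hpt t ht
  have hshift : ∫ t in Set.Ioc (0:ℝ) T, h * (ψ (t+h) - ψ t) ≤ h * (h * C₂) := by
    rw [MeasureTheory.integral_const_mul]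
    apply mul_le_mul_of_nonneg_left _ hh.le
    have hiiψ : ∀ a b : ℝ, IntervalIntegrable ψ volume a b := fun a b =>
      hψc.intervalIntegrable a b
    have e1 : ∫ t in Set.Ioc (0:ℝ) T, (ψ (t+h) - ψ t) = ∫ t in (0:ℝ)..T, (ψ (t+h) - ψ t) :=
      (integral_of_le hT.le).symm
    have e2 : ∫ t in (0:ℝ)..T, (ψ (t+h) - ψ t)
        = (∫ t in h..(T+h), ψ t) - ∫ t in (0:ℝ)..T, ψ t := by
      rw [intervalIntegral.integral_sub (hψsh.intervalIntegrable _ _) (hiiψ 0 T)]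
      congr 1
      simpa using intervalIntegral.integral_comp_add_right (a := (0:ℝ)) (b := T) ψ h
    have e3 : (∫ t in h..(T+h), ψ t) - ∫ t in (0:ℝ)..T, ψ t
        = (∫ t in T..(T+h), ψ t) - ∫ t in (0:ℝ)..h, ψ t := by
      have a1 : (∫ t in h..T, ψ t) + ∫ t in T..(T+h), ψ t = ∫ t in h..(T+h), ψ t :=
        integral_add_adjacent_intervals (hiiψ h T) (hiiψ T (T+h))
      have a2 : (∫ t in (0:ℝ)..h, ψ t) + ∫ t in h..T, ψ t = ∫ t in (0:ℝ)..T, ψ t :=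
        integral_add_adjacent_intervals (hiiψ 0 h) (hiiψ h T)
      linarith
    have b1 : ∫ t in T..(T+h), ψ t ≤ h * C₂ := by
      have := intervalIntegral.integral_mono_on (by linarith : T ≤ T + h) (hiiψ T (T+h))
        (intervalIntegrable_const) (fun x _ => hψle x)
      simpa using this
    have b2 : 0 ≤ ∫ t in (0:ℝ)..h, ψ t :=
      intervalIntegral.integral_nonneg hh.le (fun x hx => hψnn x hx.1)
    rw [e1, e2, e3]
    linarith
  calc _ ≤ ∫ t in Set.Ioc (0:ℝ) T, h * (ψ (t+h) - ψ t) := hmono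
    _ ≤ h * (h * C₂) := hshift
    _ = h ^ 2 * C₂ := by ring


open intervalIntegral in
/-- If `{k n • e^{i λ n t}}` is a Riesz sequence in `L²(0,T;H)` and the series
`Σ α n • k n e^{i λ n t}` converges in `L²(0,T+ε;H)` (with `ε > 0`) to a function which has
an absolutely continuous representative with derivative in `L²(0,T+ε;H)`, then
`{λ n * α n} ∈ ℓ²`. -/
theorem stmt2 {H : Type*} [NormedAddCommGroup H] [InnerProductSpace ℂ H] [CompleteSpace H]
    (T ε : ℝ) (hT : 0 < T) (hε : 0 < ε)
    (lam : ℕ → ℝ) (hlam : ∀ n, lam n ≠ 0) (k : ℕ → H)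
    (hRiesz : ∃ m M : ℝ, 0 < m ∧ m ≤ M ∧
      ∀ (s : Finset ℕ) (c : ℕ → ℂ),
        m * ∑ n ∈ s, ‖c n‖ ^ 2 ≤
          (∫ t in Set.Ioc (0:ℝ) T,
            ‖∑ n ∈ s, c n • (Complex.exp (Complex.I * (lam n : ℂ) * (t : ℂ)) • k n)‖ ^ 2) ∧
        (∫ t in Set.Ioc (0:ℝ) T,
            ‖∑ n ∈ s, c n • (Complex.exp (Complex.I * (lam n : ℂ) * (t : ℂ)) • k n)‖ ^ 2) ≤
          M * ∑ n ∈ s, ‖c n‖ ^ 2)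
    (α : ℕ → ℂ) (f : ℝ → H)
    (hconv : Tendsto (fun N => ∫ t in Set.Ioc (0:ℝ) (T + ε),
        ‖f t - ∑ n ∈ Finset.range N,
          α n • (Complex.exp (Complex.I * (lam n : ℂ) * (t : ℂ)) • k n)‖ ^ 2)
      atTop (nhds 0))
    (hreg : ∃ g g' : ℝ → H,
      (∀ᵐ t ∂(volume.restrict (Set.Ioc (0:ℝ) (T + ε))), f t = g t) ∧
      MemLp g' 2 (volume.restrict (Set.Ioc (0:ℝ) (T + ε))) ∧
      (∀ t ∈ Set.Icc (0:ℝ) (T + ε), g t = g 0 + ∫ s in (0:ℝ)..t, g' s)) :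
    Summable (fun n => (lam n) ^ 2 * ‖α n‖ ^ 2) := by
  obtain ⟨m, M, hm, hmM, hRZ⟩ := hRiesz
  obtain ⟨g, g', hfg, hg'2, hFTC⟩ := hreg
  set S : Set ℝ := Set.Ioc (0:ℝ) (T + ε) with hSdef
  have hSmeas : MeasurableSet S := measurableSet_Ioc
  have hfinS : IsFiniteMeasure (volume.restrict S) := ⟨by simp [hSdef, Real.volume_Ioc]⟩
  have hg'int : IntegrableOn g' S volume := hg'2.integrable (by norm_num)
  set g2 : ℝ → H := S.indicator g' with hg2def
  have hg2mem : MemLp g2 2 (volume : Measure ℝ) := (memLp_indicator_iff_restrict hSmeas).mpr hg'2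
  have hg2int : Integrable g2 volume := hg'int.integrable_indicator hSmeas
  set G : ℝ → H := fun t => g 0 + ∫ s in (0:ℝ)..t, g2 s with hGdef
  set C₂ : ℝ := ∫ s, ‖g2 s‖ ^ 2 with hC₂def
  have hC₂nn : 0 ≤ C₂ := integral_nonneg fun s => by positivity
  have hGcont : Continuous G := continuous_const.add (hg2int.continuous_primitive 0)
  have hgG : ∀ t ∈ Set.Icc (0:ℝ) (T+ε), g t = G t := by
    intro t ht
    rw [hFTC t ht, hGdef]
    congr 1
    rw [integral_of_le ht.1, integral_of_le ht.1]
    apply setIntegral_congr_fun measurableSet_Ioc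
    intro s hs
    have hsS : s ∈ S := ⟨hs.1, le_trans hs.2 ht.2⟩
    rw [hg2def, Set.indicator_of_mem hsS]
  have hfGae : f =ᵐ[volume.restrict S] G := by
    filter_upwards [hfg, ae_restrict_mem hSmeas] with t h1 h2
    rw [h1, hgG t ⟨h2.1.le, h2.2⟩]
  set P : ℕ → ℝ → H := fun N t => ∑ n ∈ Finset.range N,
    α n • (Complex.exp (Complex.I * (lam n : ℂ) * (t : ℂ)) • k n) with hPdef
  have hPcont : ∀ N, Continuous (P N) := by
    intro N
    apply continuous_finset_sum
    intro n _
    exact ((Complex.continuous_exp.comp (by fun_prop)).smul continuous_const).const_smul _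
  set E : ℕ → ℝ := fun N => ∫ t in S, ‖f t - P N t‖ ^ 2 with hEdef
  have hEconv : Tendsto E atTop (nhds 0) := hconv
  have hEG : ∀ N, E N = ∫ t in S, ‖G t - P N t‖ ^ 2 := by
    intro N
    apply MeasureTheory.integral_congr_ae
    filter_upwards [hfGae] with t ht
    rw [ht]
  have hdG : ∀ a b : ℝ, G a - G b = (∫ s in (0:ℝ)..a, g2 s) - ∫ s in (0:ℝ)..b, g2 s := by
    intro a b; rw [hGdef]; exact add_sub_add_left_eq_sub _ _ _
  -- master estimate
  have est : ∀ (N : ℕ) (h : ℝ), 0 < h → h ≤ ε →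
      m * ∑ n ∈ Finset.range N,
        ‖α n * (Complex.exp (Complex.I * (lam n : ℂ) * (h:ℂ)) - 1)‖ ^ 2
      ≤ 3 * (h ^ 2 * C₂) := by
    intro N h hh hhε
    set c : ℕ → ℂ := fun n => α n * (Complex.exp (Complex.I * (lam n : ℂ) * (h:ℂ)) - 1) with hcdef
    have key : ∀ M' : ℕ, m * ∑ n ∈ Finset.range M', ‖c n‖ ^ 2
        ≤ 6 * E M' + 3 * (h ^ 2 * C₂) := by
      intro M'
      have hid : ∀ t : ℝ, (∑ n ∈ Finset.range M',
          c n • (Complex.exp (Complex.I * (lam n : ℂ) * (t:ℂ)) • k n)) = P M' (t+h) - P M' t := by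
        intro t
        rw [hPdef]
        simp only []
        rw [← Finset.sum_sub_distrib]
        apply Finset.sum_congr rfl
        intro n _
        simp only [smul_smul]
        rw [← sub_smul]
        congr 1
        rw [hcdef]
        push_cast
        rw [mul_add, Complex.exp_add]
        ring
      have h1 := (hRZ (Finset.range M') c).1
      simp only [hid] at h1
      -- pointwise 3-term bound
      have hpt : ∀ t : ℝ, ‖P M' (t+h) - P M' t‖ ^ 2 ≤
          3 * ‖G (t+h) - P M' (t+h)‖ ^ 2 + 3 * ‖G t - P M' t‖ ^ 2
            + 3 * ‖G (t+h) - G t‖ ^ 2 := by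
        intro t
        have e : P M' (t+h) - P M' t
            = -(G (t+h) - P M' (t+h)) + (G (t+h) - G t) + (G t - P M' t) := by abel
        have hn : ‖P M' (t+h) - P M' t‖
            ≤ ‖G (t+h) - P M' (t+h)‖ + ‖G (t+h) - G t‖ + ‖G t - P M' t‖ := by
          rw [e]
          calc ‖-(G (t+h) - P M' (t+h)) + (G (t+h) - G t) + (G t - P M' t)‖
              ≤ ‖-(G (t+h) - P M' (t+h))‖ + ‖G (t+h) - G t‖ + ‖G t - P M' t‖ :=
                norm_add₃_le
            _ = _ := by rw [norm_neg]
        have h2 : ‖P M' (t+h) - P M' t‖ ^ 2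
            ≤ (‖G (t+h) - P M' (t+h)‖ + ‖G (t+h) - G t‖ + ‖G t - P M' t‖) ^ 2 :=
          pow_le_pow_left₀ (norm_nonneg _) hn 2
        nlinarith [sq_nonneg (‖G (t+h) - P M' (t+h)‖ - ‖G (t+h) - G t‖),
          sq_nonneg (‖G (t+h) - P M' (t+h)‖ - ‖G t - P M' t‖),
          sq_nonneg (‖G (t+h) - G t‖ - ‖G t - P M' t‖)]
      -- continuity / integrability
      have cA : Continuous fun t : ℝ => ‖G (t+h) - P M' (t+h)‖ ^ 2 :=
        (((hGcont.sub (hPcont M')).comp (continuous_add_right h)).norm).pow 2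
      have cB : Continuous fun t : ℝ => ‖G t - P M' t‖ ^ 2 :=
        ((hGcont.sub (hPcont M')).norm).pow 2
      have cC : Continuous fun t : ℝ => ‖G (t+h) - G t‖ ^ 2 :=
        (((hGcont.comp (continuous_add_right h)).sub hGcont).norm).pow 2
      have intA : IntegrableOn (fun t : ℝ => ‖G (t+h) - P M' (t+h)‖ ^ 2) (Set.Ioc 0 T) volume :=
        cA.integrableOn_Ioc
      have intB : IntegrableOn (fun t : ℝ => ‖G t - P M' t‖ ^ 2) (Set.Ioc 0 T) volume :=
        cB.integrableOn_Ioc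
      have intC : IntegrableOn (fun t : ℝ => ‖G (t+h) - G t‖ ^ 2) (Set.Ioc 0 T) volume :=
        cC.integrableOn_Ioc
      have h3 : (∫ t in Set.Ioc (0:ℝ) T, ‖P M' (t+h) - P M' t‖ ^ 2)
          ≤ ∫ t in Set.Ioc (0:ℝ) T, (3 * ‖G (t+h) - P M' (t+h)‖ ^ 2
            + 3 * ‖G t - P M' t‖ ^ 2 + 3 * ‖G (t+h) - G t‖ ^ 2) := by
        apply integral_mono_of_nonneg (Eventually.of_forall fun t => by positivity)
          (((intA.const_mul 3).add (intB.const_mul 3)).add (intC.const_mul 3))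
        exact Eventually.of_forall fun t => hpt t
      have h4 : (∫ t in Set.Ioc (0:ℝ) T, (3 * ‖G (t+h) - P M' (t+h)‖ ^ 2
            + 3 * ‖G t - P M' t‖ ^ 2 + 3 * ‖G (t+h) - G t‖ ^ 2))
          = 3 * (∫ t in Set.Ioc (0:ℝ) T, ‖G (t+h) - P M' (t+h)‖ ^ 2)
            + 3 * (∫ t in Set.Ioc (0:ℝ) T, ‖G t - P M' t‖ ^ 2)
            + 3 * (∫ t in Set.Ioc (0:ℝ) T, ‖G (t+h) - G t‖ ^ 2) := by
        rw [MeasureTheory.integral_add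
            (f := fun t : ℝ => 3 * ‖G (t+h) - P M' (t+h)‖ ^ 2 + 3 * ‖G t - P M' t‖ ^ 2)
            (g := fun t : ℝ => 3 * ‖G (t+h) - G t‖ ^ 2)
            (by exact (intA.const_mul 3).add (intB.const_mul 3)) (intC.const_mul 3),
          MeasureTheory.integral_add (intA.const_mul 3) (intB.const_mul 3),
          MeasureTheory.integral_const_mul, MeasureTheory.integral_const_mul,
          MeasureTheory.integral_const_mul]
      have hGPint : IntegrableOn (fun t : ℝ => ‖G t - P M' t‖ ^ 2) S volume :=
        cB.integrableOn_Ioc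
      have bA : (∫ t in Set.Ioc (0:ℝ) T, ‖G (t+h) - P M' (t+h)‖ ^ 2) ≤ E M' := by
        have e1 : (∫ t in Set.Ioc (0:ℝ) T, ‖G (t+h) - P M' (t+h)‖ ^ 2)
            = ∫ t in Set.Ioc h (T+h), ‖G t - P M' t‖ ^ 2 := by
          rw [← integral_of_le hT.le, ← integral_of_le (by linarith : h ≤ T+h)]
          simpa using intervalIntegral.integral_comp_add_right
            (a := (0:ℝ)) (b := T) (fun t => ‖G t - P M' t‖ ^ 2) h
        rw [e1, hEG M']
        apply setIntegral_mono_set hGPint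
          (Eventually.of_forall fun t => by positivity)
          ((Set.Ioc_subset_Ioc hh.le (by linarith)).eventuallyLE)
      have bB : (∫ t in Set.Ioc (0:ℝ) T, ‖G t - P M' t‖ ^ 2) ≤ E M' := by
        rw [hEG M']
        apply setIntegral_mono_set hGPint
          (Eventually.of_forall fun t => by positivity)
          ((Set.Ioc_subset_Ioc le_rfl (by linarith)).eventuallyLE)
      have bC : (∫ t in Set.Ioc (0:ℝ) T, ‖G (t+h) - G t‖ ^ 2) ≤ h ^ 2 * C₂ := by
        have hkb := key_bound T h hT hh g2 hg2mem hg2int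
        simpa only [hdG] using hkb
      calc m * ∑ n ∈ Finset.range M', ‖c n‖ ^ 2
          ≤ ∫ t in Set.Ioc (0:ℝ) T, ‖P M' (t+h) - P M' t‖ ^ 2 := h1
        _ ≤ _ := h3
        _ = _ := h4
        _ ≤ 3 * E M' + 3 * E M' + 3 * (h ^ 2 * C₂) := by
            have := bA; have := bB; have := bC
            gcongr
        _ = 6 * E M' + 3 * (h ^ 2 * C₂) := by ring
    have mono : ∀ M' : ℕ, N ≤ M' →
        m * ∑ n ∈ Finset.range N, ‖c n‖ ^ 2 ≤ 6 * E M' + 3 * (h ^ 2 * C₂) := by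
      intro M' hNM
      refine le_trans ?_ (key M')
      apply mul_le_mul_of_nonneg_left _ hm.le
      exact Finset.sum_le_sum_of_subset_of_nonneg (Finset.range_subset_range.mpr hNM)
        (fun n _ _ => by positivity)
    have hlim : Tendsto (fun M' : ℕ => 6 * E M' + 3 * (h ^ 2 * C₂)) atTop
        (nhds (6 * 0 + 3 * (h ^ 2 * C₂))) :=
      ((hEconv.const_mul 6).add tendsto_const_nhds)
    have hfin := ge_of_tendsto hlim (eventually_atTop.mpr ⟨N, mono⟩)
    calc m * ∑ n ∈ Finset.range N, ‖c n‖ ^ 2 ≤ 6 * 0 + 3 * (h ^ 2 * C₂) := hfin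
      _ = 3 * (h ^ 2 * C₂) := by ring
  -- Step 3 : h → 0
  set hj : ℕ → ℝ := fun j => ε / ((j:ℝ) + 1) with hjdef
  have hjpos : ∀ j, 0 < hj j := fun j => by rw [hjdef]; positivity
  have hjle : ∀ j, hj j ≤ ε := fun j => by
    rw [hjdef]
    apply div_le_self hε.le
    have : (0:ℝ) ≤ (j:ℝ) := Nat.cast_nonneg j
    linarith
  have hj0 : Tendsto hj atTop (nhds 0) := by
    have h2 := (tendsto_const_div_atTop_nhds_zero_nat ε).comp (tendsto_add_atTop_nat 1)
    have : (fun j : ℕ => ε / ((j + 1 : ℕ):ℝ)) = hj := by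
      funext j; rw [hjdef]; push_cast; ring_nf
    rwa [Function.comp_def, this] at h2
  have hjW : Tendsto hj atTop (nhdsWithin 0 {x : ℝ | x ≠ 0}) :=
    tendsto_nhdsWithin_of_tendsto_nhds_of_eventually_within _ hj0
      (Eventually.of_forall fun j => (hjpos j).ne')
  have slope : ∀ lmb : ℝ, Tendsto
      (fun j : ℕ => ‖Complex.exp (Complex.I * (lmb:ℂ) * ((hj j : ℝ):ℂ)) - 1‖ / hj j)
      atTop (nhds |lmb|) := by
    intro lmb
    have h0 : HasDerivAt (fun x : ℝ => ((x:ℝ):ℂ)) 1 0 := by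
      simpa using (hasDerivAt_id (0:ℝ)).ofReal_comp
    have h1 : HasDerivAt (fun x : ℝ => Complex.I * (lmb:ℂ) * ((x:ℝ):ℂ))
        (Complex.I * (lmb:ℂ)) 0 := by
      simpa using h0.const_mul (Complex.I * (lmb:ℂ))
    have hd : HasDerivAt (fun x : ℝ => Complex.exp (Complex.I * (lmb:ℂ) * ((x:ℝ):ℂ)))
        (Complex.I * (lmb:ℂ)) 0 := by
      simpa using h1.cexp
    have h3 := hd.tendsto_slope_zero
    have h4 := (h3.comp hjW).norm
    have h5 : (fun j : ℕ => ‖(hj j)⁻¹ • (Complex.exp (Complex.I * (lmb:ℂ) * (((0:ℝ) + hj j : ℝ):ℂ))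
        - Complex.exp (Complex.I * (lmb:ℂ) * (((0:ℝ):ℝ):ℂ)))‖)
        = fun j : ℕ => ‖Complex.exp (Complex.I * (lmb:ℂ) * ((hj j : ℝ):ℂ)) - 1‖ / hj j := by
      funext j
      rw [zero_add, norm_smul]
      simp [abs_of_pos (hjpos j), inv_mul_eq_div]
    have h6 : ‖Complex.I * (lmb:ℂ)‖ = |lmb| := by
      simp
    have h7 : Tendsto (fun j : ℕ =>
        ‖Complex.exp (Complex.I * (lmb:ℂ) * ((hj j : ℝ):ℂ)) - 1‖ / hj j) atTop
        (nhds ‖Complex.I * (lmb:ℂ)‖) := by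
      refine h4.congr fun j => ?_
      simp only [Function.comp_apply]
      rw [zero_add, norm_smul]
      simp [Real.norm_eq_abs, abs_inv, abs_of_pos (hjpos j), inv_mul_eq_div,
        Complex.ofReal_zero, mul_zero, Complex.exp_zero]
    rwa [h6] at h7
  -- conclusion
  apply summable_of_sum_range_le (c := 3 * C₂ / m) (fun n => by positivity)
  intro N
  rw [le_div_iff₀ hm]
  have hFle : ∀ j : ℕ, (∑ n ∈ Finset.range N, ‖α n‖ ^ 2 *
      (‖Complex.exp (Complex.I * (lam n:ℂ) * ((hj j : ℝ):ℂ)) - 1‖ / hj j) ^ 2) * m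
      ≤ 3 * C₂ := by
    intro j
    have hest := est N (hj j) (hjpos j) (hjle j)
    have expand : ∑ n ∈ Finset.range N, ‖α n‖ ^ 2 *
        (‖Complex.exp (Complex.I * (lam n:ℂ) * ((hj j : ℝ):ℂ)) - 1‖ / hj j) ^ 2
        = (∑ n ∈ Finset.range N,
            ‖α n * (Complex.exp (Complex.I * (lam n:ℂ) * ((hj j : ℝ):ℂ)) - 1)‖ ^ 2)
          / (hj j) ^ 2 := by
      rw [Finset.sum_div]
      refine Finset.sum_congr rfl fun n _ => ?_
      rw [norm_mul, mul_pow, div_pow]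
      ring
    rw [expand, div_mul_eq_mul_div, div_le_iff₀ (by positivity)]
    calc (∑ n ∈ Finset.range N,
          ‖α n * (Complex.exp (Complex.I * (lam n:ℂ) * ((hj j : ℝ):ℂ)) - 1)‖ ^ 2) * m
        = m * ∑ n ∈ Finset.range N,
          ‖α n * (Complex.exp (Complex.I * (lam n:ℂ) * ((hj j : ℝ):ℂ)) - 1)‖ ^ 2 :=
          mul_comm _ _
      _ ≤ 3 * ((hj j) ^ 2 * C₂) := hest
      _ = 3 * C₂ * (hj j) ^ 2 := by ring
  have hFlim : Tendsto (fun j : ℕ => (∑ n ∈ Finset.range N, ‖α n‖ ^ 2 *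
      (‖Complex.exp (Complex.I * (lam n:ℂ) * ((hj j : ℝ):ℂ)) - 1‖ / hj j) ^ 2) * m) atTop
      (nhds ((∑ n ∈ Finset.range N, ‖α n‖ ^ 2 * (lam n) ^ 2) * m)) := by
    apply Tendsto.mul_const
    apply tendsto_finset_sum
    intro n _
    exact tendsto_const_nhds.mul (by simpa [sq_abs] using ((slope (lam n)).pow 2))
  have hfinal := le_of_tendsto hFlim (Eventually.of_forall hFle)
  calc (∑ i ∈ Finset.range N, lam i ^ 2 * ‖α i‖ ^ 2) * m
      = (∑ n ∈ Finset.range N, ‖α n‖ ^ 2 * (lam n) ^ 2) * m := by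
        rw [Finset.sum_congr rfl fun n _ => mul_comm (lam n ^ 2) (‖α n‖ ^ 2)]
    _ ≤ 3 * C₂ := hfinal
end

section
/- Let T > 0 and let M : [0,T] → ℝ be continuous. Then there exists a unique continuous function R : [0,T] → ℝ satisfying R(t) + ∫₀ᵗ M(t−s) R(s) ds = M(t) for all t ∈ [0,T]. -/
open MeasureTheory Set intervalIntegral Function

/-- Clamped extension of `M` to all of `ℝ`. -/
noncomputable def resMc (T : ℝ) (M : ℝ → ℝ) : ℝ → ℝ := fun t => M (max 0 (min t T))

lemma resMc_cont (T : ℝ) (hT : 0 ≤ T) (M : ℝ → ℝ) (hM : ContinuousOn M (Set.Icc 0 T)) :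
    Continuous (resMc T M) := by
  apply hM.comp_continuous (Continuous.max continuous_const (continuous_id.min continuous_const))
  intro x
  exact ⟨le_max_left _ _, max_le hT (min_le_right _ _)⟩

lemma resMc_eq (T : ℝ) (M : ℝ → ℝ) {t : ℝ} (ht : t ∈ Set.Icc 0 T) :
    resMc T M t = M t := by
  simp [resMc, min_eq_left ht.2, max_eq_right ht.1]

/-- The Volterra map whose fixed point is the resolvent kernel. -/
noncomputable def resPhi (T : ℝ) (hT : 0 ≤ T) (Mc : ℝ → ℝ) (hMc : Continuous Mc)
    (f : C(Set.Icc (0:ℝ) T, ℝ)) : C(Set.Icc (0:ℝ) T, ℝ) where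
  toFun := fun t => Mc t - ∫ s in (0:ℝ)..(t:ℝ), Mc (↑t - s) * Set.IccExtend hT f s
  continuous_toFun := by
    have hg : Continuous (Set.IccExtend hT f) := f.continuous.Icc_extend'
    have h1 : Continuous fun x : ℝ => ∫ s in (0:ℝ)..x, Mc (x - s) * Set.IccExtend hT f s := by
      apply continuous_parametric_intervalIntegral_of_continuous _ continuous_id
      exact (hMc.comp (continuous_fst.sub continuous_snd)).mul (hg.comp continuous_snd)
    exact (hMc.comp continuous_subtype_val).sub (h1.comp continuous_subtype_val)

lemma resPhi_apply (T : ℝ) (hT : 0 ≤ T) (Mc : ℝ → ℝ) (hMc : Continuous Mc)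
    (f : C(Set.Icc (0:ℝ) T, ℝ)) (t : Set.Icc (0:ℝ) T) :
    resPhi T hT Mc hMc f t
      = Mc t - ∫ s in (0:ℝ)..(t:ℝ), Mc (↑t - s) * Set.IccExtend hT f s := rfl

/-- Existence and uniqueness of the resolvent kernel: for every continuous `M : [0,T] → ℝ`
there is a unique continuous `R : [0,T] → ℝ` with `R(t) + ∫₀ᵗ M(t-s) R(s) ds = M(t)` on
`[0,T]`. -/
theorem stmt3 (T : ℝ) (hT : 0 < T) (M : ℝ → ℝ) (hM : ContinuousOn M (Set.Icc 0 T)) :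
    (∃ R : ℝ → ℝ, ContinuousOn R (Set.Icc 0 T) ∧
      ∀ t ∈ Set.Icc (0:ℝ) T, R t + ∫ s in (0:ℝ)..t, M (t - s) * R s = M t) ∧
    (∀ R₁ R₂ : ℝ → ℝ,
      ContinuousOn R₁ (Set.Icc 0 T) →
      (∀ t ∈ Set.Icc (0:ℝ) T, R₁ t + ∫ s in (0:ℝ)..t, M (t - s) * R₁ s = M t) →
      ContinuousOn R₂ (Set.Icc 0 T) →
      (∀ t ∈ Set.Icc (0:ℝ) T, R₂ t + ∫ s in (0:ℝ)..t, M (t - s) * R₂ s = M t) →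
      Set.EqOn R₁ R₂ (Set.Icc 0 T)) := by
  have hT0 : (0:ℝ) ≤ T := hT.le
  set Mc : ℝ → ℝ := resMc T M with hMcdef
  have hMc : Continuous Mc := resMc_cont T hT0 M hM
  -- a bound for Mc
  obtain ⟨C₀, hC₀⟩ : ∃ C, ∀ x, |Mc x| ≤ C := by
    obtain ⟨C, hC⟩ := (isCompact_Icc (a := (0:ℝ)) (b := T)).exists_bound_of_continuousOn hM
    refine ⟨C, fun x => ?_⟩
    have hx : max 0 (min x T) ∈ Set.Icc (0:ℝ) T :=
      ⟨le_max_left _ _, max_le hT0 (min_le_right _ _)⟩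
    simpa [Mc, resMc] using hC _ hx
  set C : ℝ := max C₀ 0 with hCdef
  have hC0 : (0:ℝ) ≤ C := le_max_right _ _
  have hC : ∀ x, |Mc x| ≤ C := fun x => (hC₀ x).trans (le_max_left _ _)
  set Φ : C(Set.Icc (0:ℝ) T, ℝ) → C(Set.Icc (0:ℝ) T, ℝ) := resPhi T hT0 Mc hMc with hΦdef
  -- iterate bound
  have key : ∀ n : ℕ, ∀ f h : C(Set.Icc (0:ℝ) T, ℝ), ∀ t : Set.Icc (0:ℝ) T,
      |(Φ^[n] f) t - (Φ^[n] h) t| ≤ C ^ n * (t:ℝ) ^ n / n.factorial * dist f h := by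
    intro n
    induction n with
    | zero =>
      intro f h t
      simpa [Real.dist_eq] using ContinuousMap.dist_apply_le_dist (f := f) (g := h) t
    | succ n ih =>
      intro f h t
      set F := Φ^[n] f with hF
      set H := Φ^[n] h with hH
      have hFH : ∀ s : Set.Icc (0:ℝ) T,
          |F s - H s| ≤ C ^ n * (s:ℝ) ^ n / n.factorial * dist f h := ih f h
      have ht0 : (0:ℝ) ≤ (t:ℝ) := t.2.1
      have htT : (t:ℝ) ≤ T := t.2.2
      have hgF : Continuous (Set.IccExtend hT0 F) := F.continuous.Icc_extend'
      have hgH : Continuous (Set.IccExtend hT0 H) := H.continuous.Icc_extend'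
      have hiF : IntervalIntegrable (fun s => Mc ((t:ℝ) - s) * Set.IccExtend hT0 F s)
          volume 0 (t:ℝ) :=
        (((hMc.comp (continuous_const.sub continuous_id)).mul hgF)).intervalIntegrable _ _
      have hiH : IntervalIntegrable (fun s => Mc ((t:ℝ) - s) * Set.IccExtend hT0 H s)
          volume 0 (t:ℝ) :=
        (((hMc.comp (continuous_const.sub continuous_id)).mul hgH)).intervalIntegrable _ _
      have step1 : (Φ^[n+1] f) t - (Φ^[n+1] h) t
          = -∫ s in (0:ℝ)..(t:ℝ),
              Mc ((t:ℝ) - s) * (Set.IccExtend hT0 F s - Set.IccExtend hT0 H s) := by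
        rw [iterate_succ_apply', iterate_succ_apply', ← hF, ← hH]
        rw [show Φ = resPhi T hT0 Mc hMc from rfl]
        rw [resPhi_apply, resPhi_apply]
        have e : (∫ s in (0:ℝ)..(t:ℝ),
              Mc ((t:ℝ) - s) * (Set.IccExtend hT0 F s - Set.IccExtend hT0 H s))
            = (∫ s in (0:ℝ)..(t:ℝ), Mc ((t:ℝ) - s) * Set.IccExtend hT0 F s)
              - ∫ s in (0:ℝ)..(t:ℝ), Mc ((t:ℝ) - s) * Set.IccExtend hT0 H s := by
          rw [← intervalIntegral.integral_sub hiF hiH]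
          congr 1
          ext s
          ring
        rw [e]
        ring
      rw [step1, abs_neg]
      have habs : |∫ s in (0:ℝ)..(t:ℝ),
            Mc ((t:ℝ) - s) * (Set.IccExtend hT0 F s - Set.IccExtend hT0 H s)|
          ≤ ∫ s in (0:ℝ)..(t:ℝ),
            |Mc ((t:ℝ) - s) * (Set.IccExtend hT0 F s - Set.IccExtend hT0 H s)| :=
        intervalIntegral.abs_integral_le_integral_abs ht0
      have hmono : (∫ s in (0:ℝ)..(t:ℝ),
            |Mc ((t:ℝ) - s) * (Set.IccExtend hT0 F s - Set.IccExtend hT0 H s)|)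
          ≤ ∫ s in (0:ℝ)..(t:ℝ), C ^ (n+1) / n.factorial * dist f h * s ^ n := by
        apply intervalIntegral.integral_mono_on ht0
        · exact (((hMc.comp (continuous_const.sub continuous_id)).mul
            (hgF.sub hgH)).abs).intervalIntegrable _ _
        · exact (Continuous.intervalIntegrable (by continuity) _ _)
        · intro s hs
          have hsT : s ∈ Set.Icc (0:ℝ) T := ⟨hs.1, hs.2.trans htT⟩
          have e1 : Set.IccExtend hT0 F s = F ⟨s, hsT⟩ := Set.IccExtend_of_mem _ _ hsT
          have e2 : Set.IccExtend hT0 H s = H ⟨s, hsT⟩ := Set.IccExtend_of_mem _ _ hsT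
          rw [abs_mul, e1, e2]
          have h1 : |Mc ((t:ℝ) - s)| ≤ C := hC _
          have h2 : |F ⟨s, hsT⟩ - H ⟨s, hsT⟩| ≤ C ^ n * s ^ n / n.factorial * dist f h := by
            simpa using hFH ⟨s, hsT⟩
          calc |Mc ((t:ℝ) - s)| * |F ⟨s, hsT⟩ - H ⟨s, hsT⟩|
              ≤ C * (C ^ n * s ^ n / n.factorial * dist f h) :=
                mul_le_mul h1 h2 (abs_nonneg _) hC0
            _ = C ^ (n+1) / n.factorial * dist f h * s ^ n := by ring
      have hval : (∫ s in (0:ℝ)..(t:ℝ), C ^ (n+1) / n.factorial * dist f h * s ^ n)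
          = C ^ (n+1) * (t:ℝ) ^ (n+1) / (n+1).factorial * dist f h := by
        rw [intervalIntegral.integral_const_mul, integral_pow]
        rw [Nat.factorial_succ]
        have h1 : ((n.factorial : ℝ)) ≠ 0 := Nat.cast_ne_zero.2 n.factorial_ne_zero
        have h2 : ((n:ℝ) + 1) ≠ 0 := by positivity
        push_cast
        field_simp
        try ring
      calc |∫ s in (0:ℝ)..(t:ℝ),
            Mc ((t:ℝ) - s) * (Set.IccExtend hT0 F s - Set.IccExtend hT0 H s)|
          ≤ ∫ s in (0:ℝ)..(t:ℝ), C ^ (n+1) / n.factorial * dist f h * s ^ n :=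
            habs.trans hmono
        _ = C ^ (n+1) * (t:ℝ) ^ (n+1) / (n+1).factorial * dist f h := hval
  -- choose n with (C*T)^n / n! < 1
  obtain ⟨n, hn⟩ : ∃ n : ℕ, (C * T) ^ n / n.factorial < 1 := by
    have := FloorSemiring.tendsto_pow_div_factorial_atTop (C * T)
    have h1 := this.eventually (gt_mem_nhds (show (0:ℝ) < 1 by norm_num))
    exact h1.exists
  set K : NNReal := ((C * T) ^ n / n.factorial).toNNReal with hKdef
  have hKval : (K : ℝ) = (C * T) ^ n / n.factorial := by
    rw [hKdef, Real.coe_toNNReal]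
    positivity
  have hK1 : K < 1 := Real.toNNReal_lt_one.2 hn
  have hLip : LipschitzWith K Φ^[n] := by
    apply LipschitzWith.of_dist_le_mul
    intro f h
    rw [ContinuousMap.dist_le (by positivity)]
    intro t
    have ht0 : (0:ℝ) ≤ (t:ℝ) := t.2.1
    have htT : (t:ℝ) ≤ T := t.2.2
    have h1 := key n f h t
    have h2 : C ^ n * (t:ℝ) ^ n / n.factorial * dist f h
        ≤ (C * T) ^ n / n.factorial * dist f h := by
      rw [mul_pow]
      gcongr
    rw [Real.dist_eq, hKval]
    exact h1.trans h2
  have hcontr : ContractingWith K Φ^[n] := ⟨hK1, hLip⟩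
  have hne : Nonempty C(Set.Icc (0:ℝ) T, ℝ) := ⟨0⟩
  -- fixed point
  set x : C(Set.Icc (0:ℝ) T, ℝ) := hcontr.fixedPoint Φ^[n] with hxdef
  have hx : Function.IsFixedPt Φ x := hcontr.isFixedPt_fixedPoint_iterate
  -- characterization of fixed points of Φ in terms of the integral equation
  have hMceq : ∀ {u : ℝ}, u ∈ Set.Icc (0:ℝ) T → Mc u = M u := by
    intro u hu
    rw [hMcdef]
    exact resMc_eq T M hu
  have integral_congr_lemma : ∀ (g : ℝ → ℝ) (t : ℝ), t ∈ Set.Icc (0:ℝ) T →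
      (∫ s in (0:ℝ)..t, Mc (t - s) * g s) = ∫ s in (0:ℝ)..t, M (t - s) * g s := by
    intro g t ht
    apply intervalIntegral.integral_congr
    intro s hs
    rw [Set.uIcc_of_le ht.1] at hs
    have hts : t - s ∈ Set.Icc (0:ℝ) T := ⟨by linarith [hs.2], by linarith [hs.1, ht.2]⟩
    show Mc (t - s) * g s = M (t - s) * g s
    rw [hMceq hts]
  constructor
  · -- existence
    refine ⟨Set.IccExtend hT0 x, (x.continuous.Icc_extend').continuousOn, ?_⟩
    intro t ht
    have e0 : Set.IccExtend hT0 x t = x ⟨t, ht⟩ := Set.IccExtend_of_mem _ _ ht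
    have heq := congrFun (congrArg DFunLike.coe hx) ⟨t, ht⟩
    rw [show Φ = resPhi T hT0 Mc hMc from rfl, resPhi_apply] at heq
    have hint := integral_congr_lemma (Set.IccExtend hT0 x) t ht
    rw [e0, ← hint]
    have hMct : Mc t = M t := hMceq ht
    simp only [← heq, hMct]
    ring
  · -- uniqueness
    intro R₁ R₂ hR₁c hR₁ hR₂c hR₂ t ht
    have build : ∀ (R : ℝ → ℝ) (hRc : ContinuousOn R (Set.Icc 0 T)),
        (∀ t ∈ Set.Icc (0:ℝ) T, R t + ∫ s in (0:ℝ)..t, M (t - s) * R s = M t) →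
        Function.IsFixedPt Φ ⟨(Set.Icc (0:ℝ) T).restrict R, hRc.restrict⟩ := by
      intro R hRc hReq
      apply ContinuousMap.ext
      intro t
      have ht' : (t:ℝ) ∈ Set.Icc (0:ℝ) T := t.2
      rw [show Φ = resPhi T hT0 Mc hMc from rfl, resPhi_apply]
      have hext : ∀ s ∈ Set.uIcc (0:ℝ) (t:ℝ),
          Mc ((t:ℝ) - s) * Set.IccExtend hT0
            (⟨(Set.Icc (0:ℝ) T).restrict R, ContinuousOn.restrict hRc⟩ :
              C(Set.Icc (0:ℝ) T, ℝ)) s = M ((t:ℝ) - s) * R s := by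
        intro s hs
        rw [Set.uIcc_of_le t.2.1] at hs
        have hsT : s ∈ Set.Icc (0:ℝ) T := ⟨hs.1, hs.2.trans t.2.2⟩
        have hts : (t:ℝ) - s ∈ Set.Icc (0:ℝ) T :=
          ⟨by linarith [hs.2], by linarith [hs.1, ht'.2]⟩
        rw [Set.IccExtend_of_mem _ _ hsT, hMceq hts]
        rfl
      rw [intervalIntegral.integral_congr hext, hMceq ht']
      have := hReq (t:ℝ) ht'
      show M (t:ℝ) - _ = R (t:ℝ)
      linarith
    have h1 := build R₁ hR₁c hR₁
    have h2 := build R₂ hR₂c hR₂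
    have e : (⟨(Set.Icc (0:ℝ) T).restrict R₁, ContinuousOn.restrict hR₁c⟩ :
          C(Set.Icc (0:ℝ) T, ℝ))
        = ⟨(Set.Icc (0:ℝ) T).restrict R₂, ContinuousOn.restrict hR₂c⟩ :=
      hcontr.fixedPoint_unique' (h1.iterate n) (h2.iterate n)
    have := congrFun (congrArg DFunLike.coe e) ⟨t, ht⟩
    exact this
end

section
/- Let T > 0 and let M : [0,T] → ℝ be twice continuously differentiable, and let R be the resolvent kernel of M. Then R is twice continuously differentiable on [0,T], and R′ = M′ − M(0)R − M′*R and R″ = M″ − M(0)R′ − M′(0)R − M″*R on [0,T]. -/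
open MeasureTheory Set intervalIntegral

lemma conv_primitive (T t : ℝ) (ht : t ∈ Icc (0:ℝ) T) (g g' f : ℝ → ℝ)
    (hg : Continuous g) (hg' : Continuous g') (hf : Continuous f)
    (hftc : ∀ x ∈ Icc (0:ℝ) T, ∫ u in (0:ℝ)..x, g' u = g x - g 0) :
    ∫ s in (0:ℝ)..t, g (t-s) * f s
      = g 0 * (∫ s in (0:ℝ)..t, f s) + ∫ r in (0:ℝ)..t, ∫ s in (0:ℝ)..r, g' (r-s) * f s := by
  obtain ⟨ht0, htT⟩ := ht
  set F : ℝ × ℝ → ℝ := fun p => g' (p.1 - p.2) * f p.2 with hF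
  have hFc : Continuous F := (hg'.comp (continuous_fst.sub continuous_snd)).mul (hf.comp continuous_snd)
  set S : Set (ℝ × ℝ) := {p : ℝ × ℝ | p.2 ≤ p.1} with hS
  have hSm : MeasurableSet S := measurableSet_le measurable_snd measurable_fst
  set H : ℝ → ℝ → ℝ := fun r s => Set.indicator S F (r, s) with hH
  have hint : Integrable (Function.uncurry H)
      ((volume.restrict (Ioc (0:ℝ) t)).prod (volume.restrict (Ioc (0:ℝ) t))) := by
    rw [Measure.prod_restrict]
    have h1 : IntegrableOn F (Icc (0:ℝ) t ×ˢ Icc (0:ℝ) t) :=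
      hFc.continuousOn.integrableOn_compact (isCompact_Icc.prod isCompact_Icc)
    have h2 : IntegrableOn F (Ioc (0:ℝ) t ×ˢ Ioc (0:ℝ) t) :=
      h1.mono_set (Set.prod_mono Ioc_subset_Icc_self Ioc_subset_Icc_self)
    have := h2.indicator hSm
    exact this
  have swap := MeasureTheory.integral_integral_swap hint
  -- LHS of swap: ∫ r, ∫ s, H r s
  have hL : (∫ r in Ioc (0:ℝ) t, ∫ s in Ioc (0:ℝ) t, H r s)
      = ∫ r in (0:ℝ)..t, ∫ s in (0:ℝ)..r, g' (r-s) * f s := by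
    rw [intervalIntegral.integral_of_le ht0]
    refine setIntegral_congr_fun measurableSet_Ioc ?_
    intro r hr
    have hss : ∀ s, H r s = Set.indicator (Iic r) (fun s => g' (r-s) * f s) s := by
      intro s
      simp only [hH, hS, Set.indicator_apply, Set.mem_setOf_eq, Set.mem_Iic, hF]
    simp only [hss]
    rw [setIntegral_indicator measurableSet_Iic]
    have : Ioc (0:ℝ) t ∩ Iic r = Ioc 0 r := by
      ext x; simp only [mem_inter_iff, mem_Ioc, mem_Iic]
      constructor
      · rintro ⟨⟨h1, _⟩, h3⟩; exact ⟨h1, h3⟩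
      · rintro ⟨h1, h2⟩; exact ⟨⟨h1, h2.trans hr.2⟩, h2⟩
    rw [this, intervalIntegral.integral_of_le hr.1.le]
  have hR : (∫ s in Ioc (0:ℝ) t, ∫ r in Ioc (0:ℝ) t, H r s)
      = ∫ s in (0:ℝ)..t, (g (t-s) - g 0) * f s := by
    rw [intervalIntegral.integral_of_le ht0]
    refine setIntegral_congr_fun measurableSet_Ioc ?_
    intro s hs
    have hrr : ∀ r, H r s = Set.indicator (Ici s) (fun r => g' (r-s) * f s) r := by
      intro r
      simp only [hH, hS, Set.indicator_apply, Set.mem_setOf_eq, Set.mem_Ici, hF]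
    simp only [hrr]
    rw [setIntegral_indicator measurableSet_Ici]
    have hst : Ioc (0:ℝ) t ∩ Ici s = Icc s t := by
      ext x; simp only [mem_inter_iff, mem_Ioc, mem_Ici, mem_Icc]
      constructor
      · rintro ⟨⟨_, h2⟩, h3⟩; exact ⟨h3, h2⟩
      · rintro ⟨h1, h2⟩; exact ⟨⟨lt_of_lt_of_le hs.1 h1, h2⟩, h1⟩
    rw [hst, MeasureTheory.integral_Icc_eq_integral_Ioc,
      ← intervalIntegral.integral_of_le hs.2]
    rw [intervalIntegral.integral_mul_const]
    have : (∫ r in s..t, g' (r - s)) = ∫ u in (0:ℝ)..(t-s), g' u := by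
      rw [intervalIntegral.integral_comp_sub_right]
      norm_num
    rw [this, hftc (t - s) ⟨by linarith [hs.1, hs.2], by linarith [hs.1, htT]⟩]
  rw [intervalIntegral.integral_of_le ht0, ← hL]
  rw [show (∫ r in Ioc (0:ℝ) t, ∫ s in Ioc (0:ℝ) t, H r s) = _ from swap, hR,
    ← intervalIntegral.integral_of_le ht0]
  have : (∫ s in (0:ℝ)..t, (g (t-s) - g 0) * f s)
      = (∫ s in (0:ℝ)..t, g (t-s) * f s) - g 0 * ∫ s in (0:ℝ)..t, f s := by
    rw [← intervalIntegral.integral_const_mul, ← intervalIntegral.integral_sub]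
    · congr 1; ext s; ring
    · exact ((hg.comp (by fun_prop)).mul hf).intervalIntegrable 0 t
    · exact (continuous_const.mul hf).intervalIntegrable 0 t
  rw [this]; ring

lemma conv_continuous (g f : ℝ → ℝ) (hg : Continuous g) (hf : Continuous f) :
    Continuous (fun t => ∫ s in (0:ℝ)..t, g (t-s) * f s) := by
  have : Continuous (Function.uncurry (fun (x : ℝ) (s : ℝ) => g (x - s) * f s)) :=
    (hg.comp (continuous_fst.sub continuous_snd)).mul (hf.comp continuous_snd)
  exact intervalIntegral.continuous_parametric_intervalIntegral_of_continuous this continuous_id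

lemma conv_hasDeriv (T : ℝ) (g g' f : ℝ → ℝ)
    (hg : Continuous g) (hg' : Continuous g') (hf : Continuous f)
    (hftc : ∀ x ∈ Set.Icc (0:ℝ) T, ∫ u in (0:ℝ)..x, g' u = g x - g 0)
    (t : ℝ) (ht : t ∈ Set.Icc (0:ℝ) T) :
    HasDerivWithinAt (fun t => ∫ s in (0:ℝ)..t, g (t-s) * f s)
      (g 0 * f t + ∫ s in (0:ℝ)..t, g' (t-s) * f s) (Set.Icc 0 T) t := by
  set C : ℝ → ℝ := fun r => ∫ s in (0:ℝ)..r, g' (r-s) * f s with hC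
  have hCc : Continuous C := conv_continuous g' f hg' hf
  have key : ∀ τ ∈ Set.Icc (0:ℝ) T,
      (∫ s in (0:ℝ)..τ, g (τ-s) * f s)
        = g 0 * (∫ s in (0:ℝ)..τ, f s) + ∫ r in (0:ℝ)..τ, C r :=
    fun τ hτ => conv_primitive T τ hτ g g' f hg hg' hf hftc
  have hD : HasDerivWithinAt (fun τ => g 0 * (∫ s in (0:ℝ)..τ, f s) + ∫ r in (0:ℝ)..τ, C r)
      (g 0 * f t + C t) (Set.Icc 0 T) t := by
    have h1 : HasDerivAt (fun τ => ∫ s in (0:ℝ)..τ, f s) (f t) t :=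
      (hf.integral_hasStrictDerivAt 0 t).hasDerivAt
    have h2 : HasDerivAt (fun τ => ∫ r in (0:ℝ)..τ, C r) (C t) t :=
      (hCc.integral_hasStrictDerivAt 0 t).hasDerivAt
    exact ((h1.const_mul (g 0)).add h2).hasDerivWithinAt
  exact hD.congr key (key t ht)


lemma ext_exists (T : ℝ) (hT : (0:ℝ) ≤ T) (f : ℝ → ℝ) (hf : ContinuousOn f (Set.Icc 0 T)) :
    ∃ F : ℝ → ℝ, Continuous F ∧ ∀ x ∈ Set.Icc (0:ℝ) T, F x = f x := by
  refine ⟨fun x => f (Set.projIcc 0 T hT x), ?_, ?_⟩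
  · exact hf.comp_continuous (continuous_subtype_val.comp continuous_projIcc)
      (fun x => (Set.projIcc 0 T hT x).2)
  · intro x hx
    simp only [Set.projIcc_of_mem hT hx]

lemma ftc_icc (T : ℝ) (f f' : ℝ → ℝ)
    (h : ∀ t ∈ Set.Icc (0:ℝ) T, HasDerivWithinAt f (f' t) (Set.Icc 0 T) t)
    (hf' : ContinuousOn f' (Set.Icc 0 T)) (x : ℝ) (hx : x ∈ Set.Icc (0:ℝ) T) :
    ∫ u in (0:ℝ)..x, f' u = f x - f 0 := by
  refine intervalIntegral.integral_eq_sub_of_hasDeriv_right_of_le hx.1 ?_ ?_ ?_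
  · exact ContinuousOn.mono (fun t ht => (h t ht).continuousWithinAt) (Set.Icc_subset_Icc le_rfl hx.2)
  · intro y hy
    have hy' : y ∈ Set.Icc (0:ℝ) T := ⟨hy.1.le, (hy.2.trans_le hx.2).le⟩
    exact (((h y hy').hasDerivAt (Icc_mem_nhds hy.1 (hy.2.trans_le hx.2)))).hasDerivWithinAt
  · exact (hf'.mono (Set.Icc_subset_Icc le_rfl hx.2)).intervalIntegrable_of_Icc hx.1




/-- If `M` is twice continuously differentiable on `[0,T]` (with derivatives `M'`, `M''`)
and `R` is its resolvent kernel, then `R` is twice continuously differentiable on `[0,T]`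
with `R' = M' - M(0)R - M'*R` and `R'' = M'' - M(0)R' - M'(0)R - M''*R`. -/
theorem stmt4 (T : ℝ) (hT : 0 < T) (M M' M'' : ℝ → ℝ)
    (hM : ∀ t ∈ Set.Icc (0:ℝ) T, HasDerivWithinAt M (M' t) (Set.Icc 0 T) t)
    (hM' : ∀ t ∈ Set.Icc (0:ℝ) T, HasDerivWithinAt M' (M'' t) (Set.Icc 0 T) t)
    (hM'' : ContinuousOn M'' (Set.Icc 0 T))
    (R : ℝ → ℝ) (hR : ContinuousOn R (Set.Icc 0 T))
    (hres : ∀ t ∈ Set.Icc (0:ℝ) T, R t + ∫ s in (0:ℝ)..t, M (t - s) * R s = M t) :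
    ∃ R' R'' : ℝ → ℝ,
      (∀ t ∈ Set.Icc (0:ℝ) T, HasDerivWithinAt R (R' t) (Set.Icc 0 T) t) ∧
      (∀ t ∈ Set.Icc (0:ℝ) T, HasDerivWithinAt R' (R'' t) (Set.Icc 0 T) t) ∧
      ContinuousOn R'' (Set.Icc 0 T) ∧
      (∀ t ∈ Set.Icc (0:ℝ) T,
        R' t = M' t - M 0 * R t - ∫ s in (0:ℝ)..t, M' (t - s) * R s) ∧
      (∀ t ∈ Set.Icc (0:ℝ) T,
        R'' t = M'' t - M 0 * R' t - M' 0 * R t - ∫ s in (0:ℝ)..t, M'' (t - s) * R s) := by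
  have hT' : (0:ℝ) ≤ T := hT.le
  have h0T : (0:ℝ) ∈ Set.Icc (0:ℝ) T := ⟨le_rfl, hT'⟩
  have hMc : ContinuousOn M (Set.Icc 0 T) := fun t ht => (hM t ht).continuousWithinAt
  have hM'c : ContinuousOn M' (Set.Icc 0 T) := fun t ht => (hM' t ht).continuousWithinAt
  obtain ⟨Me, hMec, hMee⟩ := ext_exists T hT' M hMc
  obtain ⟨Me', hMe'c, hMe'e⟩ := ext_exists T hT' M' hM'c
  obtain ⟨Me'', hMe''c, hMe''e⟩ := ext_exists T hT' M'' hM''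
  obtain ⟨Re, hRec, hRee⟩ := ext_exists T hT' R hR
  -- transfer of FTC relations
  have hsub : ∀ x : ℝ, x ∈ Set.Icc (0:ℝ) T → Set.Icc (0:ℝ) x ⊆ Set.Icc (0:ℝ) T :=
    fun x hx => Set.Icc_subset_Icc le_rfl hx.2
  have hftcM : ∀ x ∈ Set.Icc (0:ℝ) T, ∫ u in (0:ℝ)..x, Me' u = Me x - Me 0 := by
    intro x hx
    have h1 : ∫ u in (0:ℝ)..x, Me' u = ∫ u in (0:ℝ)..x, M' u := by
      refine intervalIntegral.integral_congr ?_
      rw [Set.uIcc_of_le hx.1]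
      exact fun u hu => hMe'e u (hsub x hx hu)
    rw [h1, ftc_icc T M M' hM hM'c x hx, hMee x hx, hMee 0 h0T]
  have hftcM' : ∀ x ∈ Set.Icc (0:ℝ) T, ∫ u in (0:ℝ)..x, Me'' u = Me' x - Me' 0 := by
    intro x hx
    have h1 : ∫ u in (0:ℝ)..x, Me'' u = ∫ u in (0:ℝ)..x, M'' u := by
      refine intervalIntegral.integral_congr ?_
      rw [Set.uIcc_of_le hx.1]
      exact fun u hu => hMe''e u (hsub x hx hu)
    rw [h1, ftc_icc T M' M'' hM' hM'' x hx, hMe'e x hx, hMe'e 0 h0T]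
  -- convolution congruences
  have hconv : ∀ (g ge : ℝ → ℝ), (∀ x ∈ Set.Icc (0:ℝ) T, ge x = g x) →
      ∀ t ∈ Set.Icc (0:ℝ) T,
      (∫ s in (0:ℝ)..t, ge (t-s) * Re s) = ∫ s in (0:ℝ)..t, g (t-s) * R s := by
    intro g ge hge t ht
    refine intervalIntegral.integral_congr ?_
    rw [Set.uIcc_of_le ht.1]
    intro s hs
    have h1 : t - s ∈ Set.Icc (0:ℝ) T := ⟨by linarith [hs.2], by linarith [hs.1, ht.2]⟩
    simp only [hge _ h1, hRee s (hsub t ht hs)]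
  -- the candidate derivatives
  set R'f : ℝ → ℝ := fun t => Me' t - Me 0 * Re t - ∫ s in (0:ℝ)..t, Me' (t-s) * Re s
    with hR'f
  set R''f : ℝ → ℝ :=
    fun t => Me'' t - Me 0 * R'f t - Me' 0 * Re t - ∫ s in (0:ℝ)..t, Me'' (t-s) * Re s
    with hR''f
  have hR'c : Continuous R'f :=
    (hMe'c.sub (continuous_const.mul hRec)).sub (conv_continuous Me' Re hMe'c hRec)
  have hR''c : Continuous R''f :=
    ((hMe''c.sub (continuous_const.mul hR'c)).sub (continuous_const.mul hRec)).sub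
      (conv_continuous Me'' Re hMe''c hRec)
  -- first derivative
  have hRD : ∀ t ∈ Set.Icc (0:ℝ) T, HasDerivWithinAt R (R'f t) (Set.Icc 0 T) t := by
    intro t ht
    have hJD := conv_hasDeriv T Me Me' Re hMec hMe'c hRec hftcM t ht
    have hMeD : HasDerivWithinAt Me (M' t) (Set.Icc 0 T) t :=
      (hM t ht).congr (fun y hy => hMee y hy) (hMee t ht)
    have hcomb := hMeD.sub hJD
    have heq : ∀ y ∈ Set.Icc (0:ℝ) T,
        R y = Me y - ∫ s in (0:ℝ)..y, Me (y-s) * Re s := by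
      intro y hy
      have := hres y hy
      rw [hconv M Me hMee y hy, hMee y hy]
      linarith [this]
    have := hcomb.congr heq (heq t ht)
    have hval : M' t - (Me 0 * Re t + ∫ s in (0:ℝ)..t, Me' (t-s) * Re s) = R'f t := by
      rw [hR'f]; simp only [hMe'e t ht]; ring
    rwa [hval] at this
  -- second derivative
  have hRD' : ∀ t ∈ Set.Icc (0:ℝ) T, HasDerivWithinAt R'f (R''f t) (Set.Icc 0 T) t := by
    intro t ht
    have hJ'D := conv_hasDeriv T Me' Me'' Re hMe'c hMe''c hRec hftcM' t ht
    have hMe'D : HasDerivWithinAt Me' (M'' t) (Set.Icc 0 T) t :=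
      (hM' t ht).congr (fun y hy => hMe'e y hy) (hMe'e t ht)
    have hReD : HasDerivWithinAt Re (R'f t) (Set.Icc 0 T) t :=
      (hRD t ht).congr (fun y hy => hRee y hy) (hRee t ht)
    have hcomb := (hMe'D.sub (hReD.const_mul (Me 0))).sub hJ'D
    have hval : M'' t - Me 0 * R'f t - (Me' 0 * Re t + ∫ s in (0:ℝ)..t, Me'' (t-s) * Re s)
        = R''f t := by
      rw [hR''f]; simp only [hMe''e t ht]; ring
    rw [hval] at hcomb
    exact hcomb
  refine ⟨R'f, R''f, hRD, hRD', hR''c.continuousOn, ?_, ?_⟩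
  · intro t ht
    rw [hR'f]
    simp only [hMe'e t ht, hMee 0 h0T, hRee t ht, hconv M' Me' hMe'e t ht]
  · intro t ht
    rw [hR''f]
    simp only [hMe''e t ht, hMee 0 h0T, hMe'e 0 h0T, hRee t ht, hconv M'' Me'' hMe''e t ht]
end

section
/- Let X be a Banach space, T > 0, let M : [0,T] → ℝ be continuous with resolvent kernel R, and let f, g : [0,T] → X be continuous. Then g(t) = f(t) + ∫₀ᵗ M(t−s) f(s) ds for all t ∈ [0,T] if and only if f(t) = g(t) − ∫₀ᵗ R(t−s) g(s) ds for all t ∈ [0,T]. -/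
open MeasureTheory Set intervalIntegral

/-- Associativity of Volterra convolution, via Fubini on the triangle. -/
theorem conv_assoc' {X : Type*} [NormedAddCommGroup X] [NormedSpace ℝ X] [CompleteSpace X]
    (a b : ℝ → ℝ) (c : ℝ → X) (ha : Continuous a) (hb : Continuous b) (hc : Continuous c)
    {t : ℝ} (ht : 0 ≤ t) :
    (∫ s in (0:ℝ)..t, a (t - s) • (∫ u in (0:ℝ)..s, b (s - u) • c u)) =
    ∫ u in (0:ℝ)..t, (∫ v in (0:ℝ)..(t - u), a (t - u - v) * b v) • c u := by
  set H : ℝ × ℝ → X := fun p => Set.indicator {q : ℝ × ℝ | q.2 ≤ q.1}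
      (fun q => a (t - q.1) • (b (q.1 - q.2) • c q.2)) p with hH
  have hmeas : MeasurableSet {q : ℝ × ℝ | q.2 ≤ q.1} := measurableSet_le measurable_snd measurable_fst
  have hHint : Integrable H ((volume.restrict (Ioc 0 t)).prod (volume.restrict (Ioc 0 t))) := by
    rw [Measure.prod_restrict]
    apply MeasureTheory.Integrable.indicator _ hmeas
    have : IntegrableOn (fun q : ℝ × ℝ => a (t - q.1) • (b (q.1 - q.2) • c q.2))
        (Icc 0 t ×ˢ Icc 0 t) volume := by
      apply ContinuousOn.integrableOn_compact (isCompact_Icc.prod isCompact_Icc)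
      fun_prop
    exact this.mono_set (Set.prod_mono Ioc_subset_Icc_self Ioc_subset_Icc_self)
  have swap := MeasureTheory.integral_integral_swap (f := fun s u => H (s, u)) hHint
  calc (∫ s in (0:ℝ)..t, a (t - s) • (∫ u in (0:ℝ)..s, b (s - u) • c u))
      = ∫ s in Ioc (0:ℝ) t, ∫ u in Ioc (0:ℝ) t, H (s, u) := by
        rw [intervalIntegral.integral_of_le ht]
        apply setIntegral_congr_fun measurableSet_Ioc
        intro s hs
        show a (t - s) • (∫ u in (0:ℝ)..s, b (s - u) • c u) = ∫ u in Ioc (0:ℝ) t, H (s, u)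
        have h1 : (∫ u in (0:ℝ)..s, b (s - u) • c u) = ∫ u in Ioc (0:ℝ) s, b (s - u) • c u :=
          intervalIntegral.integral_of_le hs.1.le
        rw [h1, ← MeasureTheory.integral_smul]
        have h2 : ∀ u, H (s, u) = (Iic s).indicator (fun u => a (t - s) • (b (s - u) • c u)) u := by
          intro u
          simp only [hH, Set.indicator, mem_setOf_eq, mem_Iic]
        simp only [h2]
        rw [MeasureTheory.setIntegral_indicator measurableSet_Iic, Ioc_inter_Iic,
          min_eq_right hs.2]
    _ = ∫ u in Ioc (0:ℝ) t, ∫ s in Ioc (0:ℝ) t, H (s, u) := swap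
    _ = ∫ u in (0:ℝ)..t, (∫ v in (0:ℝ)..(t - u), a (t - u - v) * b v) • c u := by
        rw [intervalIntegral.integral_of_le ht]
        apply setIntegral_congr_fun measurableSet_Ioc
        intro u hu
        show (∫ s in Ioc (0:ℝ) t, H (s, u)) = (∫ v in (0:ℝ)..(t - u), a (t - u - v) * b v) • c u
        have h2 : ∀ s, H (s, u) = (Ici u).indicator (fun s => a (t - s) • (b (s - u) • c u)) s := by
          intro s
          simp only [hH, Set.indicator, mem_setOf_eq, mem_Ici]
        simp only [h2]
        rw [MeasureTheory.setIntegral_indicator measurableSet_Ici]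
        have h3 : Ioc (0:ℝ) t ∩ Ici u = Icc u t := by
          ext s
          simp only [mem_inter_iff, mem_Ioc, mem_Ici, mem_Icc]
          constructor
          · rintro ⟨⟨_, h1⟩, h2⟩; exact ⟨h2, h1⟩
          · rintro ⟨h1, h2⟩; exact ⟨⟨lt_of_lt_of_le hu.1 h1, h2⟩, h1⟩
        rw [h3, MeasureTheory.integral_Icc_eq_integral_Ioc,
          ← intervalIntegral.integral_of_le hu.2]
        have h4 : (∫ s in u..t, a (t - s) • (b (s - u) • c u)) =
            ∫ s in u..t, ((fun v => a (t - u - v) * b v) (s - u)) • c u := by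
          apply intervalIntegral.integral_congr
          intro s _
          simp only [smul_smul]
          ring_nf
        rw [h4, intervalIntegral.integral_smul_const,
          intervalIntegral.integral_comp_sub_right (fun v => a (t - u - v) * b v) u, sub_self]

/-- Commutativity of scalar Volterra convolution. -/
theorem conv_comm' (a b : ℝ → ℝ) (τ : ℝ) :
    (∫ v in (0:ℝ)..τ, a (τ - v) * b v) = ∫ v in (0:ℝ)..τ, b (τ - v) * a v := by
  have h := intervalIntegral.integral_comp_sub_left (a := (0:ℝ)) (b := τ)
    (fun x => a x * b (τ - x)) τ
  simp only [sub_zero, sub_self] at h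
  calc (∫ v in (0:ℝ)..τ, a (τ - v) * b v)
      = ∫ v in (0:ℝ)..τ, (fun x => a x * b (τ - x)) (τ - v) := by
        apply intervalIntegral.integral_congr
        intro v _
        simp only []
        ring_nf
    _ = ∫ x in (0:ℝ)..τ, a x * b (τ - x) := h
    _ = ∫ v in (0:ℝ)..τ, b (τ - v) * a v := by
        apply intervalIntegral.integral_congr
        intro v _
        ring

/-- Continuity of the Volterra convolution map. -/
theorem conv_cont' {X : Type*} [NormedAddCommGroup X] [NormedSpace ℝ X] [CompleteSpace X]
    (a : ℝ → ℝ) (c : ℝ → X) (ha : Continuous a) (hc : Continuous c) :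
    Continuous fun t => ∫ s in (0:ℝ)..t, a (t - s) • c s := by
  apply intervalIntegral.continuous_parametric_intervalIntegral_of_continuous
    (f := fun t s => a (t - s) • c s) _ continuous_id
  fun_prop

/-- MacCamy inversion: if `R` is the resolvent kernel of the continuous kernel `M`, then
for continuous `f, g : [0,T] → X` one has `g = f + M*f` on `[0,T]` if and only if
`f = g - R*g` on `[0,T]`. -/
theorem stmt5 {X : Type*} [NormedAddCommGroup X] [NormedSpace ℝ X] [CompleteSpace X]
    (T : ℝ) (hT : 0 < T) (M R : ℝ → ℝ)
    (hM : ContinuousOn M (Set.Icc 0 T)) (hR : ContinuousOn R (Set.Icc 0 T))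
    (hres : ∀ t ∈ Set.Icc (0:ℝ) T, R t + ∫ s in (0:ℝ)..t, M (t - s) * R s = M t)
    (f g : ℝ → X) (hf : ContinuousOn f (Set.Icc 0 T)) (hg : ContinuousOn g (Set.Icc 0 T)) :
    (∀ t ∈ Set.Icc (0:ℝ) T, g t = f t + ∫ s in (0:ℝ)..t, M (t - s) • f s) ↔
    (∀ t ∈ Set.Icc (0:ℝ) T, f t = g t - ∫ s in (0:ℝ)..t, R (t - s) • g s) := by
  -- clamp to [0, T]
  set cl : ℝ → ℝ := fun x => max 0 (min x T) with hcl
  have hclc : Continuous cl := by fun_prop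
  have hclmem : ∀ x, cl x ∈ Icc 0 T := fun x =>
    ⟨le_max_left _ _, max_le hT.le (min_le_right x T)⟩
  have hcleq : ∀ x ∈ Icc (0:ℝ) T, cl x = x := by
    intro x hx
    simp only [hcl, min_eq_left hx.2, max_eq_right hx.1]
  set M' : ℝ → ℝ := fun x => M (cl x) with hM'
  set R' : ℝ → ℝ := fun x => R (cl x) with hR'
  set f' : ℝ → X := fun x => f (cl x) with hf'
  set g' : ℝ → X := fun x => g (cl x) with hg'
  have hM'c : Continuous M' := hM.comp_continuous hclc hclmem
  have hR'c : Continuous R' := hR.comp_continuous hclc hclmem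
  have hf'c : Continuous f' := hf.comp_continuous hclc hclmem
  have hg'c : Continuous g' := hg.comp_continuous hclc hclmem
  have hMe : ∀ x ∈ Icc (0:ℝ) T, M' x = M x := fun x hx => by
    show M (cl x) = M x; rw [hcleq x hx]
  have hRe : ∀ x ∈ Icc (0:ℝ) T, R' x = R x := fun x hx => by
    show R (cl x) = R x; rw [hcleq x hx]
  have hfe : ∀ x ∈ Icc (0:ℝ) T, f' x = f x := fun x hx => by
    show f (cl x) = f x; rw [hcleq x hx]
  have hge : ∀ x ∈ Icc (0:ℝ) T, g' x = g x := fun x hx => by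
    show g (cl x) = g x; rw [hcleq x hx]
  -- membership helper
  have hsub : ∀ t ∈ Icc (0:ℝ) T, ∀ s ∈ Icc (0:ℝ) t, s ∈ Icc (0:ℝ) T ∧ t - s ∈ Icc (0:ℝ) T := by
    intro t ht s hs
    exact ⟨⟨hs.1, hs.2.trans ht.2⟩, ⟨by linarith [hs.2], by linarith [hs.1, ht.2]⟩⟩
  -- congruence for vector convolutions
  have hcongr : ∀ (K K' : ℝ → ℝ) (h h' : ℝ → X), (∀ x ∈ Icc (0:ℝ) T, K x = K' x) →
      (∀ x ∈ Icc (0:ℝ) T, h x = h' x) → ∀ t ∈ Icc (0:ℝ) T,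
      (∫ s in (0:ℝ)..t, K (t - s) • h s) = ∫ s in (0:ℝ)..t, K' (t - s) • h' s := by
    intro K K' h h' hK hh t ht
    apply intervalIntegral.integral_congr
    intro s hs
    rw [Set.uIcc_of_le ht.1] at hs
    obtain ⟨h1, h2⟩ := hsub t ht s hs
    show K (t - s) • h s = K' (t - s) • h' s
    rw [hK _ h2, hh _ h1]
  -- the resolvent identity for the extended kernels
  have hres' : ∀ τ ∈ Icc (0:ℝ) T, (∫ v in (0:ℝ)..τ, M' (τ - v) * R' v) = M' τ - R' τ := by
    intro τ hτ
    have e1 : (∫ v in (0:ℝ)..τ, M' (τ - v) * R' v) = ∫ v in (0:ℝ)..τ, M (τ - v) * R v := by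
      apply intervalIntegral.integral_congr
      intro v hv
      rw [Set.uIcc_of_le hτ.1] at hv
      obtain ⟨h1, h2⟩ := hsub τ hτ v hv
      show M' (τ - v) * R' v = M (τ - v) * R v
      rw [hMe _ h2, hRe _ h1]
    rw [e1, hMe _ hτ, hRe _ hτ]
    have := hres τ hτ
    linarith
  have hres'' : ∀ τ ∈ Icc (0:ℝ) T, (∫ v in (0:ℝ)..τ, R' (τ - v) * M' v) = M' τ - R' τ := by
    intro τ hτ
    rw [conv_comm']
    exact hres' τ hτ
  constructor
  · -- forward direction
    intro hyp t ht
    have h1 : ∀ s ∈ Icc (0:ℝ) T, g' s = f' s + ∫ u in (0:ℝ)..s, M' (s - u) • f' u := by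
      intro s hs
      rw [hge _ hs, hfe _ hs, hcongr M' M f' f hMe hfe s hs]
      exact hyp s hs
    have key : (∫ s in (0:ℝ)..t, R' (t - s) • g' s) = ∫ s in (0:ℝ)..t, M' (t - s) • f' s := by
      calc (∫ s in (0:ℝ)..t, R' (t - s) • g' s)
          = ∫ s in (0:ℝ)..t, (R' (t - s) • f' s +
              R' (t - s) • (∫ u in (0:ℝ)..s, M' (s - u) • f' u)) := by
            apply intervalIntegral.integral_congr
            intro s hs
            rw [Set.uIcc_of_le ht.1] at hs
            show R' (t - s) • g' s = R' (t - s) • f' s +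
              R' (t - s) • (∫ u in (0:ℝ)..s, M' (s - u) • f' u)
            rw [h1 s (hsub t ht s hs).1, smul_add]
        _ = (∫ s in (0:ℝ)..t, R' (t - s) • f' s) +
              ∫ s in (0:ℝ)..t, R' (t - s) • (∫ u in (0:ℝ)..s, M' (s - u) • f' u) := by
            apply intervalIntegral.integral_add
            · exact (Continuous.intervalIntegrable (by fun_prop) _ _)
            · apply Continuous.intervalIntegrable
              have := conv_cont' M' f' hM'c hf'c
              fun_prop
        _ = (∫ s in (0:ℝ)..t, R' (t - s) • f' s) +
              ∫ u in (0:ℝ)..t, (∫ v in (0:ℝ)..(t - u), R' (t - u - v) * M' v) • f' u := by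
            rw [conv_assoc' R' M' f' hR'c hM'c hf'c ht.1]
        _ = (∫ s in (0:ℝ)..t, R' (t - s) • f' s) +
              ∫ u in (0:ℝ)..t, (M' (t - u) • f' u - R' (t - u) • f' u) := by
            congr 1
            apply intervalIntegral.integral_congr
            intro u hu
            rw [Set.uIcc_of_le ht.1] at hu
            show (∫ v in (0:ℝ)..(t - u), R' (t - u - v) * M' v) • f' u =
              M' (t - u) • f' u - R' (t - u) • f' u
            rw [hres'' (t - u) (hsub t ht u hu).2, sub_smul]
        _ = (∫ s in (0:ℝ)..t, R' (t - s) • f' s) +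
              ((∫ u in (0:ℝ)..t, M' (t - u) • f' u) - ∫ u in (0:ℝ)..t, R' (t - u) • f' u) := by
            congr 1
            apply intervalIntegral.integral_sub <;>
              exact Continuous.intervalIntegrable (by fun_prop) _ _
        _ = ∫ s in (0:ℝ)..t, M' (t - s) • f' s := by abel
    have e2 : (∫ s in (0:ℝ)..t, R (t - s) • g s) = ∫ s in (0:ℝ)..t, R' (t - s) • g' s :=
      hcongr R R' g g' (fun x hx => (hRe x hx).symm) (fun x hx => (hge x hx).symm) t ht
    rw [e2, key, ← hfe _ ht, ← hge _ ht, h1 t ht]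
    abel
  · -- backward direction
    intro hyp t ht
    have h1 : ∀ s ∈ Icc (0:ℝ) T, f' s = g' s - ∫ u in (0:ℝ)..s, R' (s - u) • g' u := by
      intro s hs
      rw [hge _ hs, hfe _ hs, hcongr R' R g' g hRe hge s hs]
      exact hyp s hs
    have key : (∫ s in (0:ℝ)..t, M' (t - s) • f' s) = ∫ s in (0:ℝ)..t, R' (t - s) • g' s := by
      calc (∫ s in (0:ℝ)..t, M' (t - s) • f' s)
          = ∫ s in (0:ℝ)..t, (M' (t - s) • g' s -
              M' (t - s) • (∫ u in (0:ℝ)..s, R' (s - u) • g' u)) := by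
            apply intervalIntegral.integral_congr
            intro s hs
            rw [Set.uIcc_of_le ht.1] at hs
            show M' (t - s) • f' s = M' (t - s) • g' s -
              M' (t - s) • (∫ u in (0:ℝ)..s, R' (s - u) • g' u)
            rw [h1 s (hsub t ht s hs).1, smul_sub]
        _ = (∫ s in (0:ℝ)..t, M' (t - s) • g' s) -
              ∫ s in (0:ℝ)..t, M' (t - s) • (∫ u in (0:ℝ)..s, R' (s - u) • g' u) := by
            apply intervalIntegral.integral_sub
            · exact (Continuous.intervalIntegrable (by fun_prop) _ _)
            · apply Continuous.intervalIntegrable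
              have := conv_cont' R' g' hR'c hg'c
              fun_prop
        _ = (∫ s in (0:ℝ)..t, M' (t - s) • g' s) -
              ∫ u in (0:ℝ)..t, (∫ v in (0:ℝ)..(t - u), M' (t - u - v) * R' v) • g' u := by
            rw [conv_assoc' M' R' g' hM'c hR'c hg'c ht.1]
        _ = (∫ s in (0:ℝ)..t, M' (t - s) • g' s) -
              ∫ u in (0:ℝ)..t, (M' (t - u) • g' u - R' (t - u) • g' u) := by
            congr 1
            apply intervalIntegral.integral_congr
            intro u hu
            rw [Set.uIcc_of_le ht.1] at hu
            show (∫ v in (0:ℝ)..(t - u), M' (t - u - v) * R' v) • g' u =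
              M' (t - u) • g' u - R' (t - u) • g' u
            rw [hres' (t - u) (hsub t ht u hu).2, sub_smul]
        _ = (∫ s in (0:ℝ)..t, M' (t - s) • g' s) -
              ((∫ u in (0:ℝ)..t, M' (t - u) • g' u) - ∫ u in (0:ℝ)..t, R' (t - u) • g' u) := by
            congr 1
            apply intervalIntegral.integral_sub <;>
              exact Continuous.intervalIntegrable (by fun_prop) _ _
        _ = ∫ s in (0:ℝ)..t, R' (t - s) • g' s := by abel
    have e2 : (∫ s in (0:ℝ)..t, M (t - s) • f s) = ∫ s in (0:ℝ)..t, M' (t - s) • f' s :=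
      hcongr M M' f f' (fun x hx => (hMe x hx).symm) (fun x hx => (hfe x hx).symm) t ht
    rw [e2, key, ← hfe _ ht, ← hge _ ht, h1 t ht]
    abel
end

section
/- Let T > 0, λ₁ > 0, b ∈ ℝ and let K : [0,T] → ℝ be continuous. There exists a constant C = C(T, λ₁, b, K) such that for every λ ≥ λ₁, every α, β ∈ ℝ, and every continuous Z : [0,T] → ℝ satisfying Z(t) = α cos(λt) + β sin(λt) + (b/λ) ∫₀ᵗ sin(λ(t−s)) Z(s) ds + (1/λ) ∫₀ᵗ sin(λ(t−s)) (∫₀ˢ K(s−r) Z(r) dr) ds for all t ∈ [0,T], one has sup_{t∈[0,T]} |Z(t)| ≤ C (|α| + |β|). -/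
set_option maxHeartbeats 1000000

open MeasureTheory Set

private lemma exp_integral_aux (c u : ℝ) (hc : c ≠ 0) :
    ∫ s in (0:ℝ)..u, Real.exp (c * s) = (Real.exp (c * u) - 1) / c := by
  rw [intervalIntegral.integral_comp_mul_left (fun x => Real.exp x) hc]
  simp [integral_exp, smul_eq_mul]
  field_simp

/-- Gronwall-type uniform estimate for the modal integral equation: there is a constant
`C = C(T, λ₁, b, K)` such that every continuous solution of
`Z(t) = α cos(λt) + β sin(λt) + (b/λ) ∫₀ᵗ sin(λ(t-s)) Z(s) ds
  + (1/λ) ∫₀ᵗ sin(λ(t-s)) (∫₀ˢ K(s-r) Z(r) dr) ds`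
with `λ ≥ λ₁` satisfies `sup_{[0,T]} |Z| ≤ C (|α| + |β|)`. -/
theorem stmt12 (T lam₁ b : ℝ) (hT : 0 < T) (hlam₁ : 0 < lam₁)
    (K : ℝ → ℝ) (hK : ContinuousOn K (Set.Icc 0 T)) :
    ∃ C : ℝ, ∀ lam : ℝ, lam₁ ≤ lam → ∀ α β : ℝ, ∀ Z : ℝ → ℝ,
      ContinuousOn Z (Set.Icc 0 T) →
      (∀ t ∈ Set.Icc (0:ℝ) T,
        Z t = α * Real.cos (lam * t) + β * Real.sin (lam * t)
          + (b / lam) * ∫ s in (0:ℝ)..t, Real.sin (lam * (t - s)) * Z s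
          + (1 / lam) * ∫ s in (0:ℝ)..t, Real.sin (lam * (t - s)) *
              (∫ r in (0:ℝ)..s, K (s - r) * Z r)) →
      ∀ t ∈ Set.Icc (0:ℝ) T, |Z t| ≤ C * (|α| + |β|) := by
  obtain ⟨MK0, hMK0⟩ := isCompact_Icc.exists_bound_of_continuousOn hK
  set MK := max MK0 0 with hMKdef
  have hMK : ∀ x ∈ Icc (0:ℝ) T, |K x| ≤ MK := fun x hx =>
    le_trans (by simpa using hMK0 x hx) (le_max_left _ _)
  have hMKnn : (0:ℝ) ≤ MK := le_max_right _ _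
  set L : ℝ := |b| / lam₁ + |b| * T * MK / (2 * lam₁ ^ 2) + 1 with hLdef
  have hL1 : (1:ℝ) ≤ L := by
    have h1 : 0 ≤ |b| / lam₁ := div_nonneg (abs_nonneg _) hlam₁.le
    have h2 : 0 ≤ |b| * T * MK / (2 * lam₁ ^ 2) :=
      div_nonneg (mul_nonneg (mul_nonneg (abs_nonneg _) hT.le) hMKnn) (by positivity)
    simp only [hLdef]; linarith
  have hLpos : (0:ℝ) < L := lt_of_lt_of_le one_pos hL1
  refine ⟨2 * Real.exp (2 * L * T), ?_⟩
  intro lam hlam α β Z hZc hEq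
  have hlam0 : (0:ℝ) < lam := lt_of_lt_of_le hlam₁ hlam
  set A := |α| + |β| with hAdef
  have hAnn : (0:ℝ) ≤ A := by positivity
  -- weighted sup
  set g : ℝ → ℝ := fun t => Real.exp (-(2 * L * t)) * |Z t| with hgdef
  have hgc : ContinuousOn g (Icc 0 T) :=
    ((Real.continuous_exp.comp (continuous_const.mul continuous_id).neg).continuousOn).mul hZc.abs
  obtain ⟨u, huI, humax⟩ :=
    isCompact_Icc.exists_isMaxOn ⟨0, left_mem_Icc.2 hT.le⟩ hgc
  obtain ⟨hu0, huT⟩ := huI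
  set N := g u with hNdef
  have hNnn : (0:ℝ) ≤ N := mul_nonneg (Real.exp_pos _).le (abs_nonneg _)
  have hZle : ∀ s ∈ Icc (0:ℝ) T, |Z s| ≤ N * Real.exp (2 * L * s) := by
    intro s hs
    have hgs : g s ≤ N := humax hs
    have hexp : Real.exp (2 * L * s) * Real.exp (-(2 * L * s)) = 1 := by
      rw [← Real.exp_add]; simp
    calc |Z s| = Real.exp (2 * L * s) * g s := by
          simp only [hgdef]; rw [← mul_assoc, hexp, one_mul]
      _ ≤ Real.exp (2 * L * s) * N :=
          mul_le_mul_of_nonneg_left hgs (Real.exp_pos _).le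
      _ = N * Real.exp (2 * L * s) := mul_comm _ _
  -- exact integral of the weight
  have hcontw : ∀ c : ℝ, Continuous fun s : ℝ => c * Real.exp (2 * L * s) := by
    intro c
    have h2 : Continuous fun s : ℝ => 2 * L * s := continuous_const.mul continuous_id
    exact continuous_const.mul (Real.continuous_exp.comp h2)
  have hint : ∀ c u' : ℝ, (∫ s in (0:ℝ)..u', c * Real.exp (2 * L * s))
      = c * ((Real.exp (2 * L * u') - 1) / (2 * L)) := by
    intro c u'
    rw [intervalIntegral.integral_const_mul, exp_integral_aux (2 * L) u' (by positivity)]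
  have hEand : ∀ v : ℝ, 0 ≤ v → 0 ≤ (Real.exp (2 * L * v) - 1) / (2 * L) := by
    intro v hv
    have : (1:ℝ) ≤ Real.exp (2 * L * v) := Real.one_le_exp (by positivity)
    apply div_nonneg (by linarith) (by linarith)
  set E := Real.exp (2 * L * u) with hEdef
  have hE1 : (1:ℝ) ≤ E := Real.one_le_exp (by positivity)
  set D := (E - 1) / (2 * L) with hDdef
  have hDnn : (0:ℝ) ≤ D := hEand u hu0
  -- inner convolution bound
  have hinner : ∀ s : ℝ, 0 < s → s ≤ u →
      |∫ r in (0:ℝ)..s, K (s - r) * Z r|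
        ≤ (MK * N) * ((Real.exp (2 * L * s) - 1) / (2 * L)) := by
    intro s hs0 hsu
    have hb := intervalIntegral.norm_integral_le_abs_of_norm_le (μ := volume)
      (f := fun r => K (s - r) * Z r)
      (g := fun r => (MK * N) * Real.exp (2 * L * r)) (a := 0) (b := s)
      (ae_restrict_of_forall_mem measurableSet_uIoc ?_)
      ((hcontw (MK * N)).intervalIntegrable 0 s)
    · rw [Real.norm_eq_abs] at hb
      refine hb.trans ?_
      rw [hint (MK * N) s,
        abs_of_nonneg (mul_nonneg (mul_nonneg hMKnn hNnn) (hEand s hs0.le))]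
    · intro r hr
      rw [Set.uIoc_of_le hs0.le] at hr
      have hrIcc : r ∈ Icc (0:ℝ) T := ⟨hr.1.le, hr.2.trans (hsu.trans huT)⟩
      have hsr : s - r ∈ Icc (0:ℝ) T :=
        ⟨by linarith [hr.2], by linarith [hr.1, hsu.trans huT]⟩
      rw [Real.norm_eq_abs, abs_mul]
      calc |K (s - r)| * |Z r| ≤ MK * (N * Real.exp (2 * L * r)) :=
            mul_le_mul (hMK _ hsr) (hZle r hrIcc) (abs_nonneg _) hMKnn
        _ = (MK * N) * Real.exp (2 * L * r) := by ring
  -- the double-integral term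
  set J := ∫ s in (0:ℝ)..u, Real.sin (lam * (u - s)) *
      (∫ r in (0:ℝ)..s, K (s - r) * Z r) with hJdef
  have hI2 : |J| ≤ (MK * N / (2 * L)) * D := by
    rw [hJdef]
    have hb := intervalIntegral.norm_integral_le_abs_of_norm_le (μ := volume)
      (f := fun s => Real.sin (lam * (u - s)) * (∫ r in (0:ℝ)..s, K (s - r) * Z r))
      (g := fun s => (MK * N / (2 * L)) * Real.exp (2 * L * s)) (a := 0) (b := u)
      (ae_restrict_of_forall_mem measurableSet_uIoc ?_)
      ((hcontw _).intervalIntegrable 0 u)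
    · rw [Real.norm_eq_abs] at hb
      refine hb.trans ?_
      rw [hint (MK * N / (2 * L)) u,
        abs_of_nonneg (mul_nonneg (div_nonneg (mul_nonneg hMKnn hNnn) (by linarith)) hDnn)]
    · intro s hs
      rw [Set.uIoc_of_le hu0] at hs
      rw [Real.norm_eq_abs, abs_mul]
      have h1 : (1:ℝ) ≤ Real.exp (2 * L * s) := Real.one_le_exp (by nlinarith [hs.1])
      calc |Real.sin (lam * (u - s))| * |∫ r in (0:ℝ)..s, K (s - r) * Z r|
          ≤ 1 * |∫ r in (0:ℝ)..s, K (s - r) * Z r| :=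
            mul_le_mul_of_nonneg_right (Real.abs_sin_le_one _) (abs_nonneg _)
        _ = |∫ r in (0:ℝ)..s, K (s - r) * Z r| := one_mul _
        _ ≤ (MK * N) * ((Real.exp (2 * L * s) - 1) / (2 * L)) := hinner s hs.1 hs.2
        _ ≤ (MK * N) * (Real.exp (2 * L * s) / (2 * L)) :=
            mul_le_mul_of_nonneg_left
              ((div_le_div_iff_of_pos_right (by linarith)).2 (by linarith))
              (mul_nonneg hMKnn hNnn)
        _ = (MK * N / (2 * L)) * Real.exp (2 * L * s) := by ring
  -- the combined outer integral
  set c₀ := (1 / lam) * ((MK * N / (2 * L)) * D) with hc₀def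
  have hc₀nn : (0:ℝ) ≤ c₀ := by
    apply mul_nonneg (by positivity)
    exact mul_nonneg (div_nonneg (mul_nonneg hMKnn hNnn) (by linarith)) hDnn
  have hIc : |∫ s in (0:ℝ)..u, (Real.sin (lam * (u - s)) * Z s + (1 / lam) * J)|
      ≤ N * D + c₀ * u := by
    have hgint : (∫ s in (0:ℝ)..u, (N * Real.exp (2 * L * s) + c₀))
        = N * D + c₀ * u := by
      rw [intervalIntegral.integral_add
        ((hcontw N).intervalIntegrable 0 u)
        intervalIntegrable_const, hint N u, intervalIntegral.integral_const]
      simp only [smul_eq_mul, hDdef]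
      ring
    have hb := intervalIntegral.norm_integral_le_abs_of_norm_le (μ := volume)
      (f := fun s => Real.sin (lam * (u - s)) * Z s + (1 / lam) * J)
      (g := fun s => N * Real.exp (2 * L * s) + c₀) (a := 0) (b := u)
      (ae_restrict_of_forall_mem measurableSet_uIoc ?_)
      (((hcontw _).intervalIntegrable 0 u).add
        intervalIntegrable_const)
    · rw [Real.norm_eq_abs] at hb
      refine hb.trans ?_
      rw [hgint, abs_of_nonneg (by positivity)]
    · intro s hs
      rw [Set.uIoc_of_le hu0] at hs
      have hsIcc : s ∈ Icc (0:ℝ) T := ⟨hs.1.le, hs.2.trans huT⟩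
      rw [Real.norm_eq_abs]
      calc |Real.sin (lam * (u - s)) * Z s + (1 / lam) * J|
          ≤ |Real.sin (lam * (u - s)) * Z s| + |(1 / lam) * J| := abs_add_le _ _
        _ ≤ N * Real.exp (2 * L * s) + c₀ := by
            refine add_le_add ?_ ?_
            · rw [abs_mul]
              calc |Real.sin (lam * (u - s))| * |Z s| ≤ 1 * |Z s| :=
                    mul_le_mul_of_nonneg_right (Real.abs_sin_le_one _) (abs_nonneg _)
                _ = |Z s| := one_mul _
                _ ≤ N * Real.exp (2 * L * s) := hZle s hsIcc
            · rw [abs_mul, abs_of_pos (by positivity : (0:ℝ) < 1 / lam), hc₀def]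
              exact mul_le_mul_of_nonneg_left hI2 (by positivity)
  -- estimate at the max point
  have hZu : |Z u| ≤ A + N * E / 2 := by
    have heq := hEq u ⟨hu0, huT⟩
    have h0 : |α * Real.cos (lam * u) + β * Real.sin (lam * u)| ≤ A := by
      calc |α * Real.cos (lam * u) + β * Real.sin (lam * u)|
          ≤ |α * Real.cos (lam * u)| + |β * Real.sin (lam * u)| := abs_add_le _ _
        _ ≤ |α| * 1 + |β| * 1 := by
            rw [abs_mul, abs_mul]
            exact add_le_add
              (mul_le_mul_of_nonneg_left (Real.abs_cos_le_one _) (abs_nonneg _))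
              (mul_le_mul_of_nonneg_left (Real.abs_sin_le_one _) (abs_nonneg _))
        _ = A := by rw [hAdef]; ring
    have h1 : |Z u| ≤ A + (|b| / lam) * (N * D + c₀ * u) := by
      rw [heq]
      refine (abs_add_le _ _).trans ?_
      refine add_le_add h0 ?_
      rw [abs_mul, abs_div, abs_of_pos hlam0]
      exact mul_le_mul_of_nonneg_left hIc (by positivity)
    have hcoef : |b| / lam + |b| * MK * u / (2 * L * lam ^ 2) ≤ L := by
      have hc1 : |b| / lam ≤ |b| / lam₁ := div_le_div₀ (abs_nonneg _) le_rfl hlam₁ hlam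
      have hc2 : |b| * MK * u / (2 * L * lam ^ 2) ≤ |b| * T * MK / (2 * lam₁ ^ 2) := by
        apply div_le_div₀ (by positivity) ?_ (by positivity) ?_
        · nlinarith [mul_nonneg (mul_nonneg (abs_nonneg b) hMKnn) (sub_nonneg.2 huT)]
        · nlinarith [sq_nonneg lam, sq_nonneg lam₁, abs_nonneg b]
      simp only [hLdef]; linarith
    have h2 : (|b| / lam) * (N * D + c₀ * u) ≤ N * E / 2 := by
      have hfac : (0:ℝ) ≤ N * D := mul_nonneg hNnn hDnn
      have hrw : (|b| / lam) * (N * D + c₀ * u)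
          = (N * D) * (|b| / lam + |b| * MK * u / (2 * L * lam ^ 2))
            + (|b| / lam) * ((1 / lam) * ((MK * N / (2 * L)) * D) * u)
            - (N * D) * (|b| * MK * u / (2 * L * lam ^ 2)) := by
        rw [hc₀def]; ring
      have hrw2 : (|b| / lam) * ((1 / lam) * ((MK * N / (2 * L)) * D) * u)
          = (N * D) * (|b| * MK * u / (2 * L * lam ^ 2)) := by
        field_simp
      rw [hrw, hrw2]
      have hstep : (N * D) * (|b| / lam + |b| * MK * u / (2 * L * lam ^ 2))
          ≤ (N * D) * L := mul_le_mul_of_nonneg_left hcoef hfac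
      have hDL : (N * D) * L = N * (E - 1) / 2 := by
        rw [hDdef]; field_simp
      nlinarith [hNnn]
    linarith
  -- conclude N ≤ 2A
  have hN2A : N ≤ 2 * A := by
    have he1 : Real.exp (-(2 * L * u)) ≤ 1 := Real.exp_le_one_iff.2 (by nlinarith [mul_nonneg hLpos.le hu0])
    have heE : Real.exp (-(2 * L * u)) * E = 1 := by
      rw [hEdef, ← Real.exp_add]; simp
    have hstep : N ≤ Real.exp (-(2 * L * u)) * A + N / 2 := by
      calc N = Real.exp (-(2 * L * u)) * |Z u| := hNdef
        _ ≤ Real.exp (-(2 * L * u)) * (A + N * E / 2) :=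
            mul_le_mul_of_nonneg_left hZu (Real.exp_pos _).le
        _ = Real.exp (-(2 * L * u)) * A + (Real.exp (-(2 * L * u)) * E) * (N / 2) := by
            ring
        _ = Real.exp (-(2 * L * u)) * A + N / 2 := by rw [heE]; ring
    have h3 : Real.exp (-(2 * L * u)) * A ≤ A := mul_le_of_le_one_left hAnn he1
    nlinarith [hstep, h3, hAnn, hNnn, he1]
  -- final bound
  intro t ht
  calc |Z t| ≤ N * Real.exp (2 * L * t) := hZle t ht
    _ ≤ (2 * A) * Real.exp (2 * L * T) := by
        apply mul_le_mul hN2A (Real.exp_le_exp.2 (by nlinarith [ht.2]))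
          (Real.exp_pos _).le (by linarith)
    _ = 2 * Real.exp (2 * L * T) * A := by ring
end

section
/- Let X be a Banach space, T > 0, b ∈ ℝ, and let K : [0,T] → ℝ be continuous. Let N ≥ 1, let v₁, …, v_N ∈ X, let 0 < λ₁ ≤ λ₂ ≤ … ≤ λ_N be positive reals, and let a₁, …, a_N, c₁, …, c_N ∈ ℝ. For each n let Z_n : [0,T] → ℝ be the (twice continuously differentiable) solution of Z_n″(t) = −λ_n² Z_n(t) + b Z_n(t) + ∫₀ᵗ K(t−s) Z_n(s) ds with Z_n(0) = a_n, Z_n′(0) = c_n. If Σ_{n=1}^{N} Z_n(t) v_n = 0 for all t ∈ [0,T], then for every μ > 0 and every t ∈ [0,T] one has Σ_{n : λ_n = μ} Z_n(t) v_n = 0; in particular, for every μ > 0, Σ_{n : λ_n = μ} a_n v_n = 0 and Σ_{n : λ_n = μ} c_n v_n = 0. -/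
open scoped Classical

/-- Vandermonde-type lemma: if all power sums vanish then each coefficient vanishes. -/
lemma aux_vdm {ι : Type*} (s : Finset ι) (x : ι → ℝ) (hx : Set.InjOn x s) (w : ι → ℝ)
    (h : ∀ k : ℕ, ∑ r ∈ s, (x r) ^ k * w r = 0) : ∀ r ∈ s, w r = 0 := by
  intro r hr
  have key : ∀ p : Polynomial ℝ, ∑ j ∈ s, Polynomial.eval (x j) p * w j = 0 := by
    intro p
    have h1 : ∀ j ∈ s, Polynomial.eval (x j) p * w j
        = ∑ i ∈ Finset.range (p.natDegree + 1), p.coeff i * ((x j) ^ i * w j) := by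
      intro j _
      rw [Polynomial.eval_eq_sum_range, Finset.sum_mul]
      exact Finset.sum_congr rfl fun i _ => by ring
    rw [Finset.sum_congr rfl h1, Finset.sum_comm]
    have : ∀ i ∈ Finset.range (p.natDegree + 1),
        ∑ j ∈ s, p.coeff i * ((x j) ^ i * w j) = 0 := by
      intro i _
      rw [← Finset.mul_sum, h i, mul_zero]
    rw [Finset.sum_congr rfl this, Finset.sum_const_zero]
  have hkey := key (Lagrange.basis s x r)
  rw [Finset.sum_eq_single r] at hkey
  · rwa [Lagrange.eval_basis_self hx hr, one_mul] at hkey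
  · intro j hj hne
    rw [Lagrange.eval_basis_of_ne hne.symm hj, zero_mul]
  · intro h'; exact absurd hr h'

/-- The derivative of a function vanishing on `[0,T]` vanishes on `[0,T]`. -/
lemma aux_deriv_zero {X : Type*} [NormedAddCommGroup X] [NormedSpace ℝ X]
    {T : ℝ} (hT : 0 < T) {f f' : ℝ → X}
    (hf : ∀ t ∈ Set.Icc (0:ℝ) T, HasDerivWithinAt f (f' t) (Set.Icc 0 T) t)
    (h0 : ∀ t ∈ Set.Icc (0:ℝ) T, f t = 0) :
    ∀ t ∈ Set.Icc (0:ℝ) T, f' t = 0 := by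
  intro t ht
  have hu : UniqueDiffWithinAt ℝ (Set.Icc (0:ℝ) T) t := uniqueDiffOn_Icc hT t ht
  have h1 : HasDerivWithinAt f (0:X) (Set.Icc (0:ℝ) T) t :=
    (hasDerivWithinAt_const t _ (0:X)).congr h0 (h0 t ht)
  have h2 := (hf t ht).derivWithin hu
  rw [h1.derivWithin hu] at h2
  exact h2.symm

/-- Key step, scalar version: if `Σ Z_n w_n ≡ 0` then `Σ λ_n² Z_n w_n ≡ 0`. -/
lemma aux_step {T : ℝ} (hT : 0 < T) {b : ℝ} {K : ℝ → ℝ}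
    (hK : ContinuousOn K (Set.Icc 0 T)) {N : ℕ}
    {lam : Fin N → ℝ} {Z Z' Z'' : Fin N → ℝ → ℝ}
    (hZ : ∀ n, ∀ t ∈ Set.Icc (0:ℝ) T, HasDerivWithinAt (Z n) (Z' n t) (Set.Icc 0 T) t)
    (hZ' : ∀ n, ∀ t ∈ Set.Icc (0:ℝ) T, HasDerivWithinAt (Z' n) (Z'' n t) (Set.Icc 0 T) t)
    (hode : ∀ n, ∀ t ∈ Set.Icc (0:ℝ) T,
      Z'' n t = -(lam n) ^ 2 * Z n t + b * Z n t + ∫ s in (0:ℝ)..t, K (t - s) * Z n s)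
    (w : Fin N → ℝ)
    (h0 : ∀ t ∈ Set.Icc (0:ℝ) T, ∑ n, Z n t * w n = 0) :
    ∀ t ∈ Set.Icc (0:ℝ) T, ∑ n, (lam n) ^ 2 * Z n t * w n = 0 := by
  have hd1 : ∀ t ∈ Set.Icc (0:ℝ) T,
      HasDerivWithinAt (fun t => ∑ n, Z n t * w n) (∑ n, Z' n t * w n)
        (Set.Icc 0 T) t := fun t ht =>
    HasDerivWithinAt.fun_sum fun n _ => (hZ n t ht).mul_const (w n)
  have hd2 : ∀ t ∈ Set.Icc (0:ℝ) T,
      HasDerivWithinAt (fun t => ∑ n, Z' n t * w n) (∑ n, Z'' n t * w n)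
        (Set.Icc 0 T) t := fun t ht =>
    HasDerivWithinAt.fun_sum fun n _ => (hZ' n t ht).mul_const (w n)
  have h1 : ∀ t ∈ Set.Icc (0:ℝ) T, ∑ n, Z' n t * w n = 0 := aux_deriv_zero hT hd1 h0
  have h2 : ∀ t ∈ Set.Icc (0:ℝ) T, ∑ n, Z'' n t * w n = 0 := aux_deriv_zero hT hd2 h1
  intro t ht
  obtain ⟨ht0, htT⟩ := ht
  have hIcc : Set.Icc (0:ℝ) t ⊆ Set.Icc (0:ℝ) T := Set.Icc_subset_Icc le_rfl htT
  have hKc : ContinuousOn (fun s => K (t - s)) (Set.Icc (0:ℝ) t) := by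
    apply hK.comp (Continuous.continuousOn (by continuity))
    intro s hs
    exact ⟨by simp only [Set.mem_Icc] at hs ⊢; linarith [hs.2],
           by simp only [Set.mem_Icc] at hs ⊢; linarith [hs.1]⟩
  have hZc : ∀ n, ContinuousOn (Z n) (Set.Icc (0:ℝ) t) := by
    intro n
    have : ContinuousOn (Z n) (Set.Icc (0:ℝ) T) := fun s hs =>
      (hZ n s hs).continuousWithinAt
    exact this.mono hIcc
  have hint : ∀ n : Fin N,
      IntervalIntegrable (fun s => K (t - s) * Z n s * w n) MeasureTheory.volume 0 t := by
    intro n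
    apply ContinuousOn.intervalIntegrable
    rw [Set.uIcc_of_le ht0]
    exact (hKc.mul (hZc n)).mul continuousOn_const
  have key : ∑ n, (∫ s in (0:ℝ)..t, K (t - s) * Z n s) * w n = 0 := by
    have e1 : ∀ n : Fin N, (∫ s in (0:ℝ)..t, K (t - s) * Z n s) * w n
        = ∫ s in (0:ℝ)..t, K (t - s) * Z n s * w n := by
      intro n
      rw [← intervalIntegral.integral_mul_const]
    rw [Finset.sum_congr rfl (fun n _ => e1 n),
      ← intervalIntegral.integral_finset_sum (fun n (_ : n ∈ Finset.univ) => hint n)]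
    have e2 : Set.EqOn (fun s => ∑ n, K (t - s) * Z n s * w n) (fun _ => (0:ℝ))
        (Set.uIcc (0:ℝ) t) := by
      intro s hs
      rw [Set.uIcc_of_le ht0] at hs
      have : ∑ n, K (t - s) * Z n s * w n = K (t - s) * ∑ n, Z n s * w n := by
        rw [Finset.mul_sum]
        exact Finset.sum_congr rfl fun n _ => by ring
      simp only [this, h0 s (hIcc hs), mul_zero]
    rw [intervalIntegral.integral_congr e2, intervalIntegral.integral_const, smul_zero]
  have expand : ∑ n, Z'' n t * w n
      = -(∑ n, (lam n) ^ 2 * Z n t * w n) + b * (∑ n, Z n t * w n)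
        + ∑ n, (∫ s in (0:ℝ)..t, K (t - s) * Z n s) * w n := by
    rw [Finset.mul_sum, ← Finset.sum_neg_distrib, ← Finset.sum_add_distrib,
      ← Finset.sum_add_distrib]
    refine Finset.sum_congr rfl fun n _ => ?_
    rw [hode n t ⟨ht0, htT⟩]
    ring
  have hz := h2 t ⟨ht0, htT⟩
  rw [expand, h0 t ⟨ht0, htT⟩, key, mul_zero, add_zero, add_zero, neg_eq_zero] at hz
  exact hz

/-- If a finite combination `Σ Z_n(t) v_n` of modal solutions of the memory equation
`Z_n'' = -λ_n² Z_n + b Z_n + K * Z_n` vanishes identically on `[0,T]`, then for every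
frequency `μ > 0` the partial combination over the indices with `λ_n = μ` also vanishes
identically; in particular the combinations of the initial data vanish:
`Σ_{λ_n = μ} a_n v_n = 0` and `Σ_{λ_n = μ} c_n v_n = 0`. -/
theorem stmt14 {X : Type*} [NormedAddCommGroup X] [NormedSpace ℝ X]
    (T : ℝ) (hT : 0 < T) (b : ℝ) (K : ℝ → ℝ) (hK : ContinuousOn K (Set.Icc 0 T))
    (N : ℕ) (hN : 1 ≤ N) (v : Fin N → X) (lam : Fin N → ℝ)
    (hpos : ∀ n, 0 < lam n) (hmono : Monotone lam)
    (a c : Fin N → ℝ) (Z Z' Z'' : Fin N → ℝ → ℝ)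
    (hZ : ∀ n, ∀ t ∈ Set.Icc (0:ℝ) T, HasDerivWithinAt (Z n) (Z' n t) (Set.Icc 0 T) t)
    (hZ' : ∀ n, ∀ t ∈ Set.Icc (0:ℝ) T, HasDerivWithinAt (Z' n) (Z'' n t) (Set.Icc 0 T) t)
    (hZ'' : ∀ n, ContinuousOn (Z'' n) (Set.Icc 0 T))
    (hode : ∀ n, ∀ t ∈ Set.Icc (0:ℝ) T,
      Z'' n t = -(lam n) ^ 2 * Z n t + b * Z n t + ∫ s in (0:ℝ)..t, K (t - s) * Z n s)
    (hZ0 : ∀ n, Z n 0 = a n) (hZ'0 : ∀ n, Z' n 0 = c n)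
    (hsum : ∀ t ∈ Set.Icc (0:ℝ) T, ∑ n, Z n t • v n = 0) :
    ∀ μ : ℝ, 0 < μ →
      (∀ t ∈ Set.Icc (0:ℝ) T,
        ∑ n ∈ Finset.univ.filter (fun n => lam n = μ), Z n t • v n = 0) ∧
      (∑ n ∈ Finset.univ.filter (fun n => lam n = μ), a n • v n = 0) ∧
      (∑ n ∈ Finset.univ.filter (fun n => lam n = μ), c n • v n = 0) := by
  intro μ hμ
  -- scalar version for an arbitrary dual functional
  have scalar : ∀ φ : StrongDual ℝ X, ∀ t ∈ Set.Icc (0:ℝ) T,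
      ∑ n ∈ Finset.univ.filter (fun n => lam n = μ), Z n t * φ (v n) = 0 := by
    intro φ
    set w : Fin N → ℝ := fun n => φ (v n) with hw
    have h0 : ∀ t ∈ Set.Icc (0:ℝ) T, ∑ n, Z n t * w n = 0 := by
      intro t ht
      have := congrArg φ (hsum t ht)
      simpa [map_sum] using this
    -- all even power sums vanish
    have hpow : ∀ k : ℕ, ∀ t ∈ Set.Icc (0:ℝ) T,
        ∑ n, ((lam n) ^ 2) ^ k * (Z n t * w n) = 0 := by
      intro k
      induction k with
      | zero => simpa using h0
      | succ k ih =>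
        have := aux_step hT hK hZ hZ' hode
          (fun n => ((lam n) ^ 2) ^ k * w n)
          (by intro t ht
              have := ih t ht
              rw [← this]
              exact Finset.sum_congr rfl fun n _ => by ring)
        intro t ht
        have h := this t ht
        rw [← h]
        exact Finset.sum_congr rfl fun n _ => by ring
    intro t ht
    -- group by the value of lam and apply the Vandermonde lemma
    set s : Finset ℝ := Finset.image lam Finset.univ with hs
    have hginj : Set.InjOn (fun x : ℝ => x ^ 2) ↑s := by
      intro x hx y hy hxy
      simp only [hs, Finset.coe_image, Set.mem_image] at hx hy
      obtain ⟨n, -, rfl⟩ := hx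
      obtain ⟨m, -, rfl⟩ := hy
      have hxp := hpos n
      have hyp := hpos m
      have h2 : lam n ^ 2 = lam m ^ 2 := by simpa using hxy
      have h3 : (lam n - lam m) * (lam n + lam m) = 0 := by linear_combination h2
      rcases mul_eq_zero.mp h3 with h4 | h4
      · linarith [sub_eq_zero.mp h4]
      · exfalso; linarith
    have hvdm : ∀ r ∈ s,
        (∑ n ∈ Finset.univ.filter (fun n => lam n = r), Z n t * w n) = 0 := by
      apply aux_vdm s (fun x => x ^ 2) hginj
      intro k
      have := hpow k t ht
      rw [← this]
      rw [← Finset.sum_fiberwise_of_maps_to (g := lam) (t := s)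
        (fun n _ => Finset.mem_image_of_mem lam (Finset.mem_univ n))
        (fun n => ((lam n) ^ 2) ^ k * (Z n t * w n))]
      refine Finset.sum_congr rfl fun r hr => ?_
      rw [Finset.mul_sum]
      refine Finset.sum_congr rfl fun n hn => ?_
      have : lam n = r := (Finset.mem_filter.mp hn).2
      rw [this]
    by_cases hmem : μ ∈ s
    · exact hvdm μ hmem
    · have : Finset.univ.filter (fun n => lam n = μ) = ∅ := by
        rw [Finset.filter_eq_empty_iff]
        intro n _ h
        exact hmem (h ▸ Finset.mem_image_of_mem lam (Finset.mem_univ n))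
      rw [this, Finset.sum_empty]
  -- back to the vector statement
  have hZero : ∀ t ∈ Set.Icc (0:ℝ) T,
      ∑ n ∈ Finset.univ.filter (fun n => lam n = μ), Z n t • v n = 0 := by
    intro t ht
    apply NormedSpace.eq_zero_of_forall_dual_eq_zero ℝ
    intro φ
    have := scalar φ t ht
    simpa [map_sum] using this
  refine ⟨hZero, ?_, ?_⟩
  · have h := hZero 0 ⟨le_rfl, hT.le⟩
    rw [← h]
    exact Finset.sum_congr rfl fun n _ => by rw [hZ0 n]
  · have hd : ∀ t ∈ Set.Icc (0:ℝ) T,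
        HasDerivWithinAt (fun t => ∑ n ∈ Finset.univ.filter (fun n => lam n = μ), Z n t • v n)
          (∑ n ∈ Finset.univ.filter (fun n => lam n = μ), Z' n t • v n)
          (Set.Icc 0 T) t := fun t ht =>
      HasDerivWithinAt.fun_sum fun n _ => (hZ n t ht).smul_const (v n)
    have h := aux_deriv_zero hT hd hZero 0 ⟨le_rfl, hT.le⟩
    rw [← h]
    exact Finset.sum_congr rfl fun n _ => by rw [hZ'0 n]
end
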